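/- arXiv:1507.00249 — 2 statements merged into one kernel-verified Lean document; each statement's English description precedes it below -/
import Mathlib

section
/- Let σ be a deficient skew shape with height a and width b, i.e., a connected skew shape each of whose northwest corners occurs on or below its main anti-diagonal and each of whose southeast corners occurs on or above it (equivalently, δ(c) ≤ 0 for all c ∈ C(σ)). Then for every toggle-symmetric probability distribution μ on J(σ), the expected jaggedness of a μ-random subshape is at most 2ab/(a+b). -/
open Finset
open scoped Classical

noncomputable section

/-- A skew Young diagram `λ/ν` (in English notation) with height `a` and width `b`.
Rows are indexed `1,…,a` from top to bottom and columns `1,…,b` from left to right;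
row `i` consists of the boxes in columns `ν i + 1, …, λ i` (each row is nonempty).
Box `[i,j]` has its southeast corner at the lattice point `(i,j)`, the point `(0,0)`
being the northwest corner of the bounding `a × b` rectangle. -/
structure SkewShape where
  a : ℕ
  b : ℕ
  ha : 1 ≤ a
  hb : 1 ≤ b
  lam : ℕ → ℕ
  nu : ℕ → ℕ
  lam_anti : ∀ i j : ℕ, 1 ≤ i → i ≤ j → j ≤ a → lam j ≤ lam i
  nu_anti : ∀ i j : ℕ, 1 ≤ i → i ≤ j → j ≤ a → nu j ≤ nu i
  nu_lt_lam : ∀ i : ℕ, 1 ≤ i → i ≤ a → nu i < lam i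
  lam_le_b : ∀ i : ℕ, 1 ≤ i → i ≤ a → lam i ≤ b
  lam_one : lam 1 = b
  nu_a : nu a = 0

namespace SkewShape

variable (σ : SkewShape)

/-- The boxes of `σ` : pairs `[i,j]` with `1 ≤ i ≤ a` and `ν i < j ≤ λ i`.
The poset `P_σ` is the set of boxes ordered componentwise:
`[i,j] ≤ [k,l]` iff `i ≤ k` and `j ≤ l` (the product order on `ℕ × ℕ`). -/
def cells : Finset (ℕ × ℕ) :=
  (Finset.Icc 1 σ.a ×ˢ Finset.Icc 1 σ.b).filter
    (fun c => σ.nu c.1 < c.2 ∧ c.2 ≤ σ.lam c.1)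

/-- The poset `P_σ` of boxes of `σ` is connected: it is nonempty, and any two boxes are
joined by a walk along comparable pairs of boxes. -/
def Connected : Prop :=
  σ.cells.Nonempty ∧ ∀ p ∈ σ.cells, ∀ q ∈ σ.cells,
    Relation.ReflTransGen
      (fun x y : ℕ × ℕ => x ∈ σ.cells ∧ y ∈ σ.cells ∧ (x ≤ y ∨ y ≤ x)) p q

/-- `I` is an order ideal of `P_σ`, i.e. a subshape of `σ`. -/
def IsIdeal (I : Finset (ℕ × ℕ)) : Prop :=
  I ⊆ σ.cells ∧ ∀ p ∈ I, ∀ q ∈ σ.cells, q ≤ p → q ∈ I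

/-- The set `J(σ)` of all order ideals of `P_σ` (equivalently, subshapes of `σ`). -/
def idealsFinset : Finset (Finset (ℕ × ℕ)) :=
  σ.cells.powerset.filter fun I => σ.IsIdeal I

/-- Box `p` can be toggled in to the order ideal `I`. -/
def CanToggleIn (I : Finset (ℕ × ℕ)) (p : ℕ × ℕ) : Prop :=
  p ∈ σ.cells ∧ p ∉ I ∧ σ.IsIdeal (insert p I)

/-- Box `p` can be toggled out of the order ideal `I`. -/
def CanToggleOut (I : Finset (ℕ × ℕ)) (p : ℕ × ℕ) : Prop :=
  p ∈ I ∧ σ.IsIdeal (I.erase p)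

/-- The jaggedness of `I`: the number of boxes that can be toggled in,
plus the number of boxes that can be toggled out. -/
def jag (I : Finset (ℕ × ℕ)) : ℕ :=
  (σ.cells.filter fun p => σ.CanToggleIn I p).card +
  (σ.cells.filter fun p => σ.CanToggleOut I p).card

/-- The probability, under `μ`, that a random order ideal of `P_σ` satisfies `E`. -/
def pr (μ : Finset (ℕ × ℕ) → ℝ) (E : Finset (ℕ × ℕ) → Prop) : ℝ :=
  ∑ I ∈ σ.idealsFinset.filter E, μ I

/-- `μ` is a probability distribution on `J(σ)`. -/
def IsProbDist (μ : Finset (ℕ × ℕ) → ℝ) : Prop :=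
  (∀ I, 0 ≤ μ I) ∧ (∑ I ∈ σ.idealsFinset, μ I = 1)

/-- `μ` is toggle-symmetric: for every box `p` of `σ`, the probability that `p` can be
toggled in equals the probability that `p` can be toggled out. -/
def ToggleSymmetric (μ : Finset (ℕ × ℕ) → ℝ) : Prop :=
  ∀ p ∈ σ.cells,
    σ.pr μ (fun I => σ.CanToggleIn I p) = σ.pr μ (fun I => σ.CanToggleOut I p)

/-- The expectation of the statistic `f` with respect to `μ`. -/
def expect (μ : Finset (ℕ × ℕ) → ℝ) (f : Finset (ℕ × ℕ) → ℝ) : ℝ :=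
  ∑ I ∈ σ.idealsFinset, μ I * f I

/-- `c` is a northwest outward corner of `σ`, occurring at the lattice point `c = (i,j)`:
the northwest boundary of `σ` turns at `(i,j)` with its two steps
(the top edge of box `[i+1,j]` and the left edge of box `[i,j+1]`)
not bordering a common box of `σ`. -/
def IsNWCorner (c : ℕ × ℕ) : Prop :=
  (c.1 + 1, c.2) ∈ σ.cells ∧ (c.1, c.2 + 1) ∈ σ.cells ∧ (c.1, c.2) ∉ σ.cells

/-- `c` is a southeast outward corner of `σ`, occurring at the lattice point `c = (i,j)`:
the southeast boundary of `σ` turns at `(i,j)` with its two steps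
(the right edge of box `[i+1,j]` and the bottom edge of box `[i,j+1]`)
not bordering a common box of `σ`. -/
def IsSECorner (c : ℕ × ℕ) : Prop :=
  (c.1 + 1, c.2) ∈ σ.cells ∧ (c.1, c.2 + 1) ∈ σ.cells ∧ (c.1 + 1, c.2 + 1) ∉ σ.cells

/-- The set of northwest outward corners of `σ`. -/
def nwCorners : Finset (ℕ × ℕ) :=
  (Finset.range (σ.a + 1) ×ˢ Finset.range (σ.b + 1)).filter fun c => σ.IsNWCorner c

/-- The set of southeast outward corners of `σ`.
(Together, `nwCorners` and `seCorners` form the set `C(σ)` of outward corners.) -/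
def seCorners : Finset (ℕ × ℕ) :=
  (Finset.range (σ.a + 1) ×ˢ Finset.range (σ.b + 1)).filter fun c => σ.IsSECorner c

/-- The displacement `δ(c) = 1 − i/a − j/b` of a northwest corner occurring at `(i,j)`. -/
def nwDisp (c : ℕ × ℕ) : ℝ := 1 - (c.1 : ℝ) / (σ.a : ℝ) - (c.2 : ℝ) / (σ.b : ℝ)

/-- The displacement `δ(c) = −1 + i/a + j/b` of a southeast corner occurring at `(i,j)`. -/
def seDisp (c : ℕ × ℕ) : ℝ := -1 + (c.1 : ℝ) / (σ.a : ℝ) + (c.2 : ℝ) / (σ.b : ℝ)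

/-- The lattice path of the subshape `I` includes both steps of the northwest corner at
`c = (i,j)`: neither box `[i+1,j]` nor box `[i,j+1]` belongs to `I`. -/
def NWInPath (c : ℕ × ℕ) (I : Finset (ℕ × ℕ)) : Prop :=
  (c.1 + 1, c.2) ∉ I ∧ (c.1, c.2 + 1) ∉ I

/-- The lattice path of the subshape `I` includes both steps of the southeast corner at
`c = (i,j)`: both boxes `[i+1,j]` and `[i,j+1]` belong to `I`. -/
def SEInPath (c : ℕ × ℕ) (I : Finset (ℕ × ℕ)) : Prop :=
  (c.1 + 1, c.2) ∈ I ∧ (c.1, c.2 + 1) ∈ I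

/-- The correction term `Σ_{c ∈ C(σ)} δ(c) · P_μ(c)`, where `P_μ(c)` is the
`μ`-probability that the lattice path of a random subshape includes both steps of `c`. -/
def cornerCorrection (μ : Finset (ℕ × ℕ) → ℝ) : ℝ :=
  (∑ c ∈ σ.nwCorners, σ.nwDisp c * σ.pr μ (NWInPath c)) +
  (∑ c ∈ σ.seCorners, σ.seDisp c * σ.pr μ (SEInPath c))

end SkewShape

namespace SkewShape

variable (σ : SkewShape)

/-- `σ` is balanced: connected, with every outward corner of displacement `0`
(i.e. occurring on the main anti-diagonal from `(a,0)` to `(0,b)`). -/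
def Balanced : Prop :=
  σ.Connected ∧ (∀ c ∈ σ.nwCorners, σ.nwDisp c = 0) ∧ ∀ c ∈ σ.seCorners, σ.seDisp c = 0

/-- `σ` is abundant: connected, with every outward corner of displacement `≥ 0`. -/
def Abundant : Prop :=
  σ.Connected ∧ (∀ c ∈ σ.nwCorners, 0 ≤ σ.nwDisp c) ∧ ∀ c ∈ σ.seCorners, 0 ≤ σ.seDisp c

/-- `σ` is deficient: connected, with every outward corner of displacement `≤ 0`. -/
def Deficient : Prop :=
  σ.Connected ∧ (∀ c ∈ σ.nwCorners, σ.nwDisp c ≤ 0) ∧ ∀ c ∈ σ.seCorners, σ.seDisp c ≤ 0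

end SkewShape

namespace SkewShape

variable (σ : SkewShape)

lemma mem_cells {p : ℕ × ℕ} :
    p ∈ σ.cells ↔ 1 ≤ p.1 ∧ p.1 ≤ σ.a ∧ σ.nu p.1 < p.2 ∧ p.2 ≤ σ.lam p.1 := by
  unfold cells
  simp only [Finset.mem_filter, Finset.mem_product, Finset.mem_Icc]
  constructor
  · rintro ⟨⟨⟨h1, h2⟩, _, _⟩, h5, h6⟩
    exact ⟨h1, h2, h5, h6⟩
  · rintro ⟨h1, h2, h5, h6⟩
    exact ⟨⟨⟨h1, h2⟩, by omega, le_trans h6 (σ.lam_le_b _ h1 h2)⟩, h5, h6⟩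

/-- The largest column of `I` in row `i` (or `ν i` if the row of `I` is empty),
with conventions `r 0 = b` and `r i = 0` for `i > a`. -/
def rmax (I : Finset (ℕ × ℕ)) (i : ℕ) : ℕ :=
  if i = 0 then σ.b else if σ.a < i then 0 else
    max (σ.nu i) ((I.filter (fun p => p.1 = i)).sup Prod.snd)

lemma rmax_zero (I : Finset (ℕ × ℕ)) : σ.rmax I 0 = σ.b := by simp [rmax]

lemma rmax_gt {i : ℕ} (I : Finset (ℕ × ℕ)) (h : σ.a < i) : σ.rmax I i = 0 := by
  unfold rmax
  rw [if_neg (by omega), if_pos h]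

lemma rmax_eq {i : ℕ} (I : Finset (ℕ × ℕ)) (h1 : 1 ≤ i) (h2 : i ≤ σ.a) :
    σ.rmax I i = max (σ.nu i) ((I.filter (fun p => p.1 = i)).sup Prod.snd) := by
  unfold rmax
  rw [if_neg (by omega), if_neg (by omega)]

lemma nu_le_rmax {i : ℕ} (I : Finset (ℕ × ℕ)) (h1 : 1 ≤ i) (h2 : i ≤ σ.a) :
    σ.nu i ≤ σ.rmax I i := by
  rw [σ.rmax_eq I h1 h2]; exact le_max_left _ _

lemma rmax_le_lam {I : Finset (ℕ × ℕ)} (hI : σ.IsIdeal I) {i : ℕ} (h1 : 1 ≤ i)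
    (h2 : i ≤ σ.a) : σ.rmax I i ≤ σ.lam i := by
  rw [σ.rmax_eq I h1 h2]
  refine max_le (le_of_lt (σ.nu_lt_lam i h1 h2)) (Finset.sup_le ?_)
  intro p hp
  rw [Finset.mem_filter] at hp
  have := (σ.mem_cells).1 (hI.1 hp.1)
  rw [hp.2] at this
  exact this.2.2.2

lemma mem_rmax {I : Finset (ℕ × ℕ)} (hI : σ.IsIdeal I) {i j : ℕ} (h1 : 1 ≤ i)
    (h2 : i ≤ σ.a) : (i, j) ∈ I ↔ σ.nu i < j ∧ j ≤ σ.rmax I i := by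
  constructor
  · intro hmem
    have hc := (σ.mem_cells).1 (hI.1 hmem)
    refine ⟨hc.2.2.1, ?_⟩
    rw [σ.rmax_eq I h1 h2]
    have hm2 : ((i, j) : ℕ × ℕ) ∈ I.filter (fun p => p.1 = i) := by simp [hmem]
    exact le_max_of_le_right (Finset.le_sup (f := Prod.snd) hm2)
  · rintro ⟨hν, hj⟩
    rw [σ.rmax_eq I h1 h2] at hj
    rcases le_max_iff.1 hj with h | h
    · omega
    · have hne : (I.filter (fun p => p.1 = i)).Nonempty := by
        by_contra hcon
        rw [Finset.not_nonempty_iff_eq_empty] at hcon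
        rw [hcon] at h
        simp at h
        omega
      obtain ⟨q, hq, hsup⟩ := Finset.exists_mem_eq_sup _ hne Prod.snd
      rw [Finset.mem_filter] at hq
      have hqI := hq.1
      have hqc := (σ.mem_cells).1 (hI.1 hqI)
      have hij : ((i, j) : ℕ × ℕ) ∈ σ.cells := by
        refine (σ.mem_cells).2 ⟨h1, h2, hν, ?_⟩
        have : j ≤ q.2 := by omega
        calc j ≤ q.2 := this
        _ ≤ σ.lam q.1 := hqc.2.2.2
        _ = σ.lam i := by rw [hq.2]
      refine hI.2 q hqI (i, j) hij ?_
      rw [Prod.le_def]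
      constructor
      · simp [hq.2]
      · simp; omega

end SkewShape
namespace SkewShape

variable (σ : SkewShape)

lemma rmax_succ_le {I : Finset (ℕ × ℕ)} (hI : σ.IsIdeal I) (i : ℕ) :
    σ.rmax I (i + 1) ≤ σ.rmax I i := by
  by_cases hgt : σ.a < i + 1
  · rw [σ.rmax_gt I hgt]; exact Nat.zero_le _
  push_neg at hgt
  by_cases h0 : i = 0
  · subst h0
    rw [σ.rmax_zero I, ← σ.lam_one]
    exact σ.rmax_le_lam hI le_rfl hgt
  have h1 : 1 ≤ i := by omega
  have h2 : i ≤ σ.a := by omega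
  rw [σ.rmax_eq I (by omega) hgt]
  refine max_le ?_ (Finset.sup_le ?_)
  · exact le_trans (σ.nu_anti i (i + 1) h1 (by omega) hgt) (σ.nu_le_rmax I h1 h2)
  · intro p hp
    rw [Finset.mem_filter] at hp
    have hpc := (σ.mem_cells).1 (hI.1 hp.1)
    by_cases hcase : p.2 ≤ σ.nu i
    · exact le_trans hcase (σ.nu_le_rmax I h1 h2)
    push_neg at hcase
    have hic : ((i, p.2) : ℕ × ℕ) ∈ σ.cells := by
      refine (σ.mem_cells).2 ⟨h1, h2, hcase, ?_⟩
      exact le_trans hpc.2.2.2 (by rw [hp.2]; exact σ.lam_anti i (i + 1) h1 (by omega) hgt)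
    have : ((i, p.2) : ℕ × ℕ) ∈ I := by
      refine hI.2 p hp.1 _ hic ?_
      rw [Prod.le_def]
      exact ⟨by simp [hp.2], le_rfl⟩
    exact ((σ.mem_rmax hI h1 h2).1 this).2

lemma rmax_anti {I : Finset (ℕ × ℕ)} (hI : σ.IsIdeal I) {i k : ℕ} (h : i ≤ k) :
    σ.rmax I k ≤ σ.rmax I i :=
  antitone_nat_of_succ_le (σ.rmax_succ_le hI) h

lemma toggleOut_iff {I : Finset (ℕ × ℕ)} (hI : σ.IsIdeal I) {p : ℕ × ℕ}
    (hp : p ∈ σ.cells) :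
    σ.CanToggleOut I p ↔
      p.2 = σ.rmax I p.1 ∧ σ.nu p.1 < p.2 ∧ σ.rmax I (p.1 + 1) < p.2 := by
  obtain ⟨i, j⟩ := p
  have hc := (σ.mem_cells).1 hp
  obtain ⟨h1, h2, hν, hlam⟩ := hc
  dsimp only at h1 h2 hν hlam ⊢
  constructor
  · rintro ⟨hmem, hid⟩
    have hjr := ((σ.mem_rmax hI h1 h2).1 hmem).2
    have hj : j = σ.rmax I i := by
      by_contra hne
      have hlt : j < σ.rmax I i := by omega
      have hin : ((i, j + 1) : ℕ × ℕ) ∈ I :=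
        (σ.mem_rmax hI h1 h2).2 ⟨by omega, by omega⟩
      have hinE : ((i, j + 1) : ℕ × ℕ) ∈ I.erase (i, j) := by
        rw [Finset.mem_erase]
        exact ⟨by simp, hin⟩
      have := hid.2 _ hinE (i, j) hp (by rw [Prod.mk_le_mk]; exact ⟨le_rfl, by omega⟩)
      rw [Finset.mem_erase] at this
      exact this.1 rfl
    refine ⟨hj, hν, ?_⟩
    by_contra hcon
    push_neg at hcon
    have hsa : i + 1 ≤ σ.a := by
      by_contra hgt
      rw [σ.rmax_gt I (by omega)] at hcon
      omega
    have hν1 : σ.nu (i + 1) < j :=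
      lt_of_le_of_lt (σ.nu_anti i (i + 1) h1 (by omega) hsa) hν
    have hin : ((i + 1, j) : ℕ × ℕ) ∈ I :=
      (σ.mem_rmax hI (by omega) hsa).2 ⟨hν1, hcon⟩
    have hinE : ((i + 1, j) : ℕ × ℕ) ∈ I.erase (i, j) := by
      rw [Finset.mem_erase]
      exact ⟨by simp, hin⟩
    have := hid.2 _ hinE (i, j) hp (by rw [Prod.mk_le_mk]; exact ⟨by omega, le_rfl⟩)
    rw [Finset.mem_erase] at this
    exact this.1 rfl
  · rintro ⟨hj, -, hlt⟩
    have hmem : ((i, j) : ℕ × ℕ) ∈ I := (σ.mem_rmax hI h1 h2).2 ⟨hν, le_of_eq hj⟩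
    refine ⟨hmem, ⟨le_trans (Finset.erase_subset _ _) hI.1, ?_⟩⟩
    intro q hq x hx hle
    rw [Finset.mem_erase] at hq ⊢
    refine ⟨?_, hI.2 q hq.2 x hx hle⟩
    rintro rfl
    -- x = (i,j) ≤ q, q ∈ I, q ≠ (i,j) : contradiction
    obtain ⟨k, l⟩ := q
    rw [Prod.mk_le_mk] at hle
    have hqc := (σ.mem_cells).1 (hI.1 hq.2)
    dsimp only at hqc
    have hql : l ≤ σ.rmax I k := ((σ.mem_rmax hI hqc.1 hqc.2.1).1 hq.2).2
    have hk : i < k := by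
      rcases Nat.lt_or_ge i k with h | h
      · exact h
      · exfalso
        have : k = i := by omega
        subst this
        have : l = j := by omega
        subst this
        exact hq.1 rfl
    have : σ.rmax I k ≤ σ.rmax I (i + 1) := σ.rmax_anti hI hk
    omega

lemma toggleIn_iff {I : Finset (ℕ × ℕ)} (hI : σ.IsIdeal I) {p : ℕ × ℕ}
    (hp : p ∈ σ.cells) :
    σ.CanToggleIn I p ↔
      p.2 = σ.rmax I p.1 + 1 ∧ σ.rmax I p.1 < σ.rmax I (p.1 - 1) := by
  obtain ⟨i, j⟩ := p
  have hc := (σ.mem_cells).1 hp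
  obtain ⟨h1, h2, hν, hlam⟩ := hc
  dsimp only at h1 h2 hν hlam ⊢
  constructor
  · rintro ⟨-, hnot, hid⟩
    have hgt : σ.rmax I i < j := by
      by_contra hcon
      push_neg at hcon
      exact hnot ((σ.mem_rmax hI h1 h2).2 ⟨hν, hcon⟩)
    have hj : j = σ.rmax I i + 1 := by
      by_contra hne
      have hνr := σ.nu_le_rmax I h1 h2
      have hx : ((i, j - 1) : ℕ × ℕ) ∈ σ.cells := by
        rw [σ.mem_cells]
        dsimp only
        exact ⟨h1, h2, by omega, by omega⟩
      have := hid.2 (i, j) (Finset.mem_insert_self _ _) (i, j - 1) hx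
        (by rw [Prod.mk_le_mk]; exact ⟨le_rfl, by omega⟩)
      rw [Finset.mem_insert] at this
      rcases this with h | h
      · have := congrArg Prod.snd h
        simp at this
        omega
      · have := ((σ.mem_rmax hI h1 h2).1 h).2
        omega
    refine ⟨hj, ?_⟩
    by_cases hi1 : i = 1
    · subst hi1
      rw [σ.rmax_zero I]
      have := σ.lam_le_b 1 le_rfl (σ.ha)
      omega
    have hi2 : 2 ≤ i := by omega
    by_cases hνc : σ.nu (i - 1) < j
    · have hx : ((i - 1, j) : ℕ × ℕ) ∈ σ.cells := by
        refine (σ.mem_cells).2 ⟨by omega, by omega, hνc, ?_⟩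
        exact le_trans hlam (σ.lam_anti (i - 1) i (by omega) (by omega) h2)
      have := hid.2 (i, j) (Finset.mem_insert_self _ _) (i - 1, j) hx
        (by rw [Prod.mk_le_mk]; exact ⟨by omega, le_rfl⟩)
      rw [Finset.mem_insert] at this
      rcases this with h | h
      · have := congrArg Prod.fst h
        simp at this
        omega
      · have := ((σ.mem_rmax hI (i := i - 1) (by omega) (by omega)).1 h).2
        omega
    · push_neg at hνc
      have := σ.nu_le_rmax I (i := i - 1) (by omega) (by omega)
      omega
  · rintro ⟨hj, hlt⟩
    have hnot : ((i, j) : ℕ × ℕ) ∉ I := by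
      intro hmem
      have := ((σ.mem_rmax hI h1 h2).1 hmem).2
      omega
    refine ⟨hp, hnot, Finset.insert_subset hp hI.1, ?_⟩
    intro q hq x hx hle
    rw [Finset.mem_insert] at hq ⊢
    rcases hq with rfl | hq
    · -- q = (i, j)
      obtain ⟨k, l⟩ := x
      rw [Prod.mk_le_mk] at hle
      by_cases hxp : ((k, l) : ℕ × ℕ) = (i, j)
      · exact Or.inl hxp
      right
      have hxc := (σ.mem_cells).1 hx
      dsimp only at hxc
      refine (σ.mem_rmax hI hxc.1 hxc.2.1).2 ⟨hxc.2.2.1, ?_⟩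
      by_cases hk : k = i
      · subst hk
        have : l ≠ j := fun h => hxp (by rw [h])
        omega
      · have hki : k ≤ i - 1 := by omega
        have := σ.rmax_anti hI (I := I) (i := k) (k := i - 1) hki
        omega
    · exact Or.inr (hI.2 q hq x hx hle)

end SkewShape
namespace SkewShape

variable (σ : SkewShape)

lemma conn_nu_lt_lam (hc : σ.Connected) {i : ℕ} (h1 : 1 ≤ i) (h2 : i < σ.a) :
    σ.nu i < σ.lam (i + 1) := by
  by_contra hle
  push_neg at hle
  have hp0 : ((i, σ.lam i) : ℕ × ℕ) ∈ σ.cells := by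
    rw [σ.mem_cells]
    exact ⟨h1, by omega, σ.nu_lt_lam i h1 (by omega), le_rfl⟩
  have hq0 : ((i + 1, σ.nu (i + 1) + 1) : ℕ × ℕ) ∈ σ.cells := by
    rw [σ.mem_cells]
    dsimp only
    exact ⟨by omega, by omega, by omega, σ.nu_lt_lam (i + 1) (by omega) (by omega)⟩
  have h := hc.2 _ hp0 _ hq0
  have key : ∀ x : ℕ × ℕ, Relation.ReflTransGen
      (fun x y : ℕ × ℕ => x ∈ σ.cells ∧ y ∈ σ.cells ∧ (x ≤ y ∨ y ≤ x))
      (i, σ.lam i) x → x.1 ≤ i := by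
    intro x hx
    induction hx with
    | refl => simp
    | tail _ hbc ih =>
      rename_i y z _
      obtain ⟨hy, hz, hcomp⟩ := hbc
      by_contra hz1
      push_neg at hz1
      have hy' := (σ.mem_cells).1 hy
      have hz' := (σ.mem_cells).1 hz
      have hy2 : σ.nu i < y.2 :=
        lt_of_le_of_lt (σ.nu_anti y.1 i hy'.1 ih (by omega)) hy'.2.2.1
      have hz2 : z.2 ≤ σ.nu i :=
        le_trans hz'.2.2.2
          (le_trans (σ.lam_anti (i + 1) z.1 (by omega) hz1 hz'.2.1) hle)
      rcases hcomp with hcc | hcc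
      · have := hcc.2; omega
      · have := hcc.1; omega
  have := key _ h
  simp at this

lemma nw_corner_mem (hc : σ.Connected) {I : Finset (ℕ × ℕ)} (hI : σ.IsIdeal I) {i : ℕ}
    (h1 : 1 ≤ i) (h2 : i ≤ σ.a) (hr : σ.rmax I i = σ.nu i)
    (hA : σ.rmax I (i + 1) < σ.rmax I i) :
    (i, σ.nu i) ∈ σ.nwCorners := by
  have hia : i < σ.a := by
    by_contra hcon
    have : i = σ.a := by omega
    subst this
    rw [σ.rmax_gt I (by omega)] at hA
    rw [hr, σ.nu_a] at hA
    omega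
  have hν1 : σ.nu (i + 1) < σ.nu i := by
    have := σ.nu_le_rmax I (i := i + 1) (by omega) (by omega)
    omega
  have hnl := σ.conn_nu_lt_lam hc h1 hia
  have hll := σ.nu_lt_lam i h1 h2
  have hlb := σ.lam_le_b i h1 h2
  unfold nwCorners
  rw [Finset.mem_filter]
  refine ⟨?_, ?_, ?_, ?_⟩
  · rw [Finset.mem_product, Finset.mem_range, Finset.mem_range]
    exact ⟨by omega, by omega⟩
  · rw [σ.mem_cells]; dsimp only
    exact ⟨by omega, by omega, hν1, by omega⟩
  · rw [σ.mem_cells]; dsimp only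
    exact ⟨h1, h2, by omega, by omega⟩
  · rw [σ.mem_cells]; dsimp only
    omega

lemma se_corner_mem (hc : σ.Connected) {I : Finset (ℕ × ℕ)} (hI : σ.IsIdeal I) {i : ℕ}
    (h1 : 1 ≤ i) (h2 : i ≤ σ.a) (hr : σ.rmax I i = σ.lam i)
    (hA : σ.rmax I i < σ.rmax I (i - 1)) :
    (i - 1, σ.lam i) ∈ σ.seCorners := by
  have hi2 : 2 ≤ i := by
    by_contra hcon
    have : i = 1 := by omega
    subst this
    rw [σ.rmax_zero I] at hA
    rw [hr, σ.lam_one] at hA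
    omega
  have hrl := σ.rmax_le_lam hI (i := i - 1) (by omega) (by omega)
  have hi1 : i - 1 + 1 = i := by omega
  have hll := σ.nu_lt_lam i h1 h2
  have hlb := σ.lam_le_b i h1 h2
  have hnl : σ.nu (i - 1) < σ.lam i := by
    have := σ.conn_nu_lt_lam hc (i := i - 1) (by omega) (by omega)
    rw [hi1] at this
    exact this
  unfold seCorners
  rw [Finset.mem_filter]
  refine ⟨?_, ?_, ?_, ?_⟩
  · rw [Finset.mem_product, Finset.mem_range, Finset.mem_range]
    exact ⟨by omega, by omega⟩
  · rw [σ.mem_cells]; dsimp only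
    rw [hi1]
    exact ⟨h1, h2, hll, le_rfl⟩
  · rw [σ.mem_cells]; dsimp only
    exact ⟨by omega, by omega, by omega, by omega⟩
  · rw [σ.mem_cells]; dsimp only
    rw [hi1]
    omega

end SkewShape
namespace SkewShape

variable (σ : SkewShape)

lemma filter_out_eq {I : Finset (ℕ × ℕ)} (hI : σ.IsIdeal I) :
    σ.cells.filter (fun p => σ.CanToggleOut I p) =
      ((Finset.Icc 1 σ.a).filter
        (fun i => σ.nu i < σ.rmax I i ∧ σ.rmax I (i + 1) < σ.rmax I i)).image
        (fun i => (i, σ.rmax I i)) := by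
  ext p
  simp only [Finset.mem_filter, Finset.mem_image, Finset.mem_Icc]
  constructor
  · rintro ⟨hp, ht⟩
    obtain ⟨hj, hν, hA⟩ := (σ.toggleOut_iff hI hp).1 ht
    have hc := (σ.mem_cells).1 hp
    refine ⟨p.1, ⟨⟨hc.1, hc.2.1⟩, by omega, by omega⟩, ?_⟩
    rw [← hj]
  · rintro ⟨i, ⟨⟨hi1, hi2⟩, hν, hA⟩, rfl⟩
    have hp : ((i, σ.rmax I i) : ℕ × ℕ) ∈ σ.cells := by
      rw [σ.mem_cells]
      dsimp only
      exact ⟨hi1, hi2, hν, σ.rmax_le_lam hI hi1 hi2⟩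
    exact ⟨hp, (σ.toggleOut_iff hI hp).2 ⟨rfl, hν, hA⟩⟩

lemma filter_in_eq {I : Finset (ℕ × ℕ)} (hI : σ.IsIdeal I) :
    σ.cells.filter (fun p => σ.CanToggleIn I p) =
      ((Finset.Icc 1 σ.a).filter
        (fun i => σ.rmax I i < σ.lam i ∧ σ.rmax I i < σ.rmax I (i - 1))).image
        (fun i => (i, σ.rmax I i + 1)) := by
  ext p
  simp only [Finset.mem_filter, Finset.mem_image, Finset.mem_Icc]
  constructor
  · rintro ⟨hp, ht⟩
    obtain ⟨hj, hA⟩ := (σ.toggleIn_iff hI hp).1 ht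
    have hc := (σ.mem_cells).1 hp
    refine ⟨p.1, ⟨⟨hc.1, hc.2.1⟩, by omega, hA⟩, ?_⟩
    rw [← hj]
  · rintro ⟨i, ⟨⟨hi1, hi2⟩, hlam, hA⟩, rfl⟩
    have hp : ((i, σ.rmax I i + 1) : ℕ × ℕ) ∈ σ.cells := by
      rw [σ.mem_cells]
      dsimp only
      have := σ.nu_le_rmax I hi1 hi2
      exact ⟨hi1, hi2, by omega, by omega⟩
    exact ⟨hp, (σ.toggleIn_iff hI hp).2 ⟨rfl, hA⟩⟩

/-- The weight attached to the box `(k, j)`. -/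
def wgt (k j : ℕ) : ℝ :=
  2 * ((σ.b : ℝ) / ((σ.a : ℝ) + (σ.b : ℝ))) * ((σ.a : ℝ) - (k : ℝ) + 1)
    + (σ.a : ℝ) / ((σ.a : ℝ) + (σ.b : ℝ)) - (σ.b : ℝ) / ((σ.a : ℝ) + (σ.b : ℝ))
    - 2 * ((σ.a : ℝ) / ((σ.a : ℝ) + (σ.b : ℝ))) * (j : ℝ)

lemma ab_pos : (0 : ℝ) < (σ.a : ℝ) + (σ.b : ℝ) := by
  have h1 : (1 : ℝ) ≤ (σ.a : ℝ) := by exact_mod_cast σ.ha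
  have h2 : (1 : ℝ) ≤ (σ.b : ℝ) := by exact_mod_cast σ.hb
  linarith

lemma nw_coeff {i : ℕ} :
    1 - σ.wgt i (σ.nu i) =
      -(2 * ((σ.a : ℝ) * (σ.b : ℝ) / ((σ.a : ℝ) + (σ.b : ℝ)))) * σ.nwDisp (i, σ.nu i) := by
  have h := σ.ab_pos
  unfold wgt nwDisp
  have ha : (σ.a : ℝ) ≠ 0 := by
    have : (1 : ℝ) ≤ (σ.a : ℝ) := by exact_mod_cast σ.ha
    linarith
  have hb : (σ.b : ℝ) ≠ 0 := by
    have : (1 : ℝ) ≤ (σ.b : ℝ) := by exact_mod_cast σ.hb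
    linarith
  field_simp
  ring

lemma se_coeff {i : ℕ} (h1 : 1 ≤ i) :
    1 + σ.wgt i (σ.lam i + 1) =
      -(2 * ((σ.a : ℝ) * (σ.b : ℝ) / ((σ.a : ℝ) + (σ.b : ℝ)))) * σ.seDisp (i - 1, σ.lam i) := by
  have h := σ.ab_pos
  unfold wgt seDisp
  have ha : (σ.a : ℝ) ≠ 0 := by
    have : (1 : ℝ) ≤ (σ.a : ℝ) := by exact_mod_cast σ.ha
    linarith
  have hb : (σ.b : ℝ) ≠ 0 := by
    have : (1 : ℝ) ≤ (σ.b : ℝ) := by exact_mod_cast σ.hb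
    linarith
  have hcast : ((i - 1 : ℕ) : ℝ) = (i : ℝ) - 1 := by
    have : (1 : ℕ) ≤ i := h1
    push_cast [this]
    ring
  dsimp only
  rw [hcast]
  push_cast
  field_simp
  ring

end SkewShape
namespace SkewShape

variable (σ : SkewShape)

lemma wgt_zero : 1 - σ.wgt 0 σ.b = 0 := by
  have h := σ.ab_pos
  unfold wgt
  field_simp
  ring

lemma wgt_last : 1 + σ.wgt (σ.a + 1) 1 = 0 := by
  have h := σ.ab_pos
  unfold wgt
  push_cast
  field_simp
  ring

lemma wgt_mid (k x y : ℕ) :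
    (1 - σ.wgt k x) + (1 + σ.wgt (k + 1) (y + 1)) =
      2 * ((σ.a : ℝ) / ((σ.a : ℝ) + (σ.b : ℝ))) * ((x : ℝ) - (y : ℝ)) := by
  have h := σ.ab_pos
  unfold wgt
  push_cast
  field_simp
  ring

lemma perIdeal_bound (hdef : σ.Deficient) {I : Finset (ℕ × ℕ)} (hI : σ.IsIdeal I) :
    ∑ i ∈ Finset.Icc 1 σ.a,
      ((if σ.nu i < σ.rmax I i ∧ σ.rmax I (i + 1) < σ.rmax I i
          then 1 - σ.wgt i (σ.rmax I i) else 0)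
        + (if σ.rmax I i < σ.lam i ∧ σ.rmax I i < σ.rmax I (i - 1)
          then 1 + σ.wgt i (σ.rmax I i + 1) else 0))
      ≤ 2 * (σ.a : ℝ) * (σ.b : ℝ) / ((σ.a : ℝ) + (σ.b : ℝ)) := by
  have hpos := σ.ab_pos
  have hH : (0 : ℝ) ≤ 2 * ((σ.a : ℝ) * (σ.b : ℝ) / ((σ.a : ℝ) + (σ.b : ℝ))) := by
    positivity
  set r : ℕ → ℕ := σ.rmax I with hr
  set A : ℕ → ℝ := fun k => if r (k + 1) < r k then 1 else 0 with hA
  set g1 : ℕ → ℝ := fun k => (1 - σ.wgt k (r k)) * A k with hg1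
  set g2 : ℕ → ℝ := fun k => (1 + σ.wgt (k + 1) (r (k + 1) + 1)) * A k with hg2
  have hstep : ∀ i ∈ Finset.Icc 1 σ.a,
      ((if σ.nu i < r i ∧ r (i + 1) < r i then 1 - σ.wgt i (r i) else 0)
        + (if r i < σ.lam i ∧ r i < r (i - 1) then 1 + σ.wgt i (r i + 1) else 0))
      ≤ g1 i + g2 (i - 1) := by
    intro i hi
    rw [Finset.mem_Icc] at hi
    have hi1 : i - 1 + 1 = i := by omega
    have hg2i : g2 (i - 1) = (1 + σ.wgt i (r i + 1)) * A (i - 1) := by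
      rw [hg2]; dsimp only; rw [hi1]
    rw [hg2i, hg1]
    dsimp only
    have hout : (if σ.nu i < r i ∧ r (i + 1) < r i then 1 - σ.wgt i (r i) else 0)
        ≤ (1 - σ.wgt i (r i)) * A i := by
      rw [hA]
      dsimp only
      by_cases hcase : σ.nu i < r i ∧ r (i + 1) < r i
      · rw [if_pos hcase, if_pos hcase.2]
        ring_nf
        exact le_rfl
      · rw [if_neg hcase]
        by_cases hlt : r (i + 1) < r i
        · rw [if_pos hlt, mul_one]
          have hrν : r i = σ.nu i := by
            have := σ.nu_le_rmax I hi.1 hi.2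
            rw [← hr] at this
            omega
          rw [hrν]
          rw [σ.nw_coeff]
          have hmem := σ.nw_corner_mem hdef.1 hI hi.1 hi.2 (by rw [← hr, hrν]) (by rw [← hr]; exact hlt)
          have hδ := hdef.2.1 _ hmem
          nlinarith [hδ, hH]
        · rw [if_neg hlt, mul_zero]
    have hin : (if r i < σ.lam i ∧ r i < r (i - 1) then 1 + σ.wgt i (r i + 1) else 0)
        ≤ (1 + σ.wgt i (r i + 1)) * A (i - 1) := by
      rw [hA]
      dsimp only
      rw [hi1]
      by_cases hcase : r i < σ.lam i ∧ r i < r (i - 1)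
      · rw [if_pos hcase, if_pos hcase.2]
        ring_nf
        exact le_rfl
      · rw [if_neg hcase]
        by_cases hlt : r i < r (i - 1)
        · rw [if_pos hlt, mul_one]
          have hrlam : r i = σ.lam i := by
            have := σ.rmax_le_lam hI hi.1 hi.2
            rw [← hr] at this
            omega
          rw [hrlam]
          rw [σ.se_coeff hi.1]
          have hmem := σ.se_corner_mem hdef.1 hI hi.1 hi.2 (by rw [← hr]; exact hrlam) (by rw [← hr]; exact hlt)
          have hδ := hdef.2.2 _ hmem
          nlinarith [hδ, hH]
        · rw [if_neg hlt, mul_zero]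
    exact add_le_add hout hin
  refine le_trans (Finset.sum_le_sum hstep) ?_
  -- now the exact telescoping evaluation
  have e1 : ∑ i ∈ Finset.Icc 1 σ.a, (g1 i + g2 (i - 1))
      = ∑ k ∈ Finset.range σ.a, (g1 (1 + k) + g2 k) := by
    rw [← Finset.Ico_add_one_right_eq_Icc, Finset.sum_Ico_eq_sum_range]
    refine Finset.sum_congr rfl fun k _ => ?_
    have h1 : 1 + k - 1 = k := by omega
    rw [h1]
  rw [e1]
  have e2 : ∑ k ∈ Finset.range σ.a, (g1 (1 + k) + g2 k)
      = (∑ k ∈ Finset.range σ.a, g1 (k + 1)) + ∑ k ∈ Finset.range σ.a, g2 k := by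
    rw [Finset.sum_add_distrib]
    congr 1
    refine Finset.sum_congr rfl ?_
    intro k _
    congr 1
    omega
  rw [e2]
  have e3 : ∑ k ∈ Finset.range σ.a, g1 (k + 1) = ∑ k ∈ Finset.range (σ.a + 1), g1 k := by
    rw [Finset.sum_range_succ']
    have : g1 0 = 0 := by
      rw [hg1]
      dsimp only
      have : r 0 = σ.b := by rw [hr]; exact σ.rmax_zero I
      rw [this, σ.wgt_zero, zero_mul]
    rw [this, add_zero]
  have e4 : ∑ k ∈ Finset.range σ.a, g2 k = ∑ k ∈ Finset.range (σ.a + 1), g2 k := by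
    rw [Finset.sum_range_succ]
    have : g2 σ.a = 0 := by
      rw [hg2]
      dsimp only
      have : r (σ.a + 1) = 0 := by rw [hr]; exact σ.rmax_gt I (by omega)
      rw [this, σ.wgt_last, zero_mul]
    rw [this, add_zero]
  rw [e3, e4, ← Finset.sum_add_distrib]
  have e5 : ∀ k ∈ Finset.range (σ.a + 1), g1 k + g2 k =
      (fun k => 2 * ((σ.a : ℝ) / ((σ.a : ℝ) + (σ.b : ℝ))) * (r k : ℝ)) k
        - (fun k => 2 * ((σ.a : ℝ) / ((σ.a : ℝ) + (σ.b : ℝ))) * (r k : ℝ)) (k + 1) := by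
    intro k hk
    rw [Finset.mem_range] at hk
    rw [hg1, hg2]
    dsimp only
    rw [← add_mul, σ.wgt_mid]
    have hmono : r (k + 1) ≤ r k := by
      rw [hr]; exact σ.rmax_succ_le hI k
    rw [hA]
    dsimp only
    by_cases hlt : r (k + 1) < r k
    · rw [if_pos hlt, mul_one]
      ring
    · rw [if_neg hlt, mul_zero]
      have : r (k + 1) = r k := by omega
      rw [this]
      ring
  rw [Finset.sum_congr rfl e5, Finset.sum_range_sub']
  have h0 : r 0 = σ.b := by rw [hr]; exact σ.rmax_zero I
  have ha1 : r (σ.a + 1) = 0 := by rw [hr]; exact σ.rmax_gt I (by omega)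
  rw [h0, ha1]
  apply le_of_eq
  push_cast
  field_simp
  ring

end SkewShape
namespace SkewShape

variable (σ : SkewShape)

lemma jag_cast (I : Finset (ℕ × ℕ)) :
    (σ.jag I : ℝ) =
      (∑ p ∈ σ.cells, (if σ.CanToggleIn I p then (1 : ℝ) else 0))
        + ∑ p ∈ σ.cells, (if σ.CanToggleOut I p then (1 : ℝ) else 0) := by
  unfold jag
  rw [Finset.card_filter, Finset.card_filter]
  push_cast
  rfl

lemma jag_decomp (I : Finset (ℕ × ℕ)) :
    (σ.jag I : ℝ) =
      (∑ p ∈ σ.cells,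
        ((1 - σ.wgt p.1 p.2) * (if σ.CanToggleOut I p then (1 : ℝ) else 0)
          + (1 + σ.wgt p.1 p.2) * (if σ.CanToggleIn I p then (1 : ℝ) else 0)))
      + ∑ p ∈ σ.cells, σ.wgt p.1 p.2 *
          ((if σ.CanToggleOut I p then (1 : ℝ) else 0)
            - (if σ.CanToggleIn I p then (1 : ℝ) else 0)) := by
  rw [σ.jag_cast I, ← Finset.sum_add_distrib, ← Finset.sum_add_distrib]
  refine Finset.sum_congr rfl fun p _ => ?_
  ring

lemma S_bound (hdef : σ.Deficient) {I : Finset (ℕ × ℕ)} (hI : σ.IsIdeal I) :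
    (∑ p ∈ σ.cells,
        ((1 - σ.wgt p.1 p.2) * (if σ.CanToggleOut I p then (1 : ℝ) else 0)
          + (1 + σ.wgt p.1 p.2) * (if σ.CanToggleIn I p then (1 : ℝ) else 0)))
      ≤ 2 * (σ.a : ℝ) * (σ.b : ℝ) / ((σ.a : ℝ) + (σ.b : ℝ)) := by
  have hout : ∑ p ∈ σ.cells,
      (1 - σ.wgt p.1 p.2) * (if σ.CanToggleOut I p then (1 : ℝ) else 0)
      = ∑ i ∈ Finset.Icc 1 σ.a,
        (if σ.nu i < σ.rmax I i ∧ σ.rmax I (i + 1) < σ.rmax I i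
          then 1 - σ.wgt i (σ.rmax I i) else 0) := by
    have h1 : ∀ p ∈ σ.cells,
        (1 - σ.wgt p.1 p.2) * (if σ.CanToggleOut I p then (1 : ℝ) else 0)
        = if σ.CanToggleOut I p then (1 - σ.wgt p.1 p.2) else 0 := by
      intro p _
      by_cases h : σ.CanToggleOut I p <;> simp [h]
    rw [Finset.sum_congr rfl h1, ← Finset.sum_filter, σ.filter_out_eq hI,
      Finset.sum_image (by intro x _ y _ h; exact congrArg Prod.fst h),
      Finset.sum_filter]
  have hin : ∑ p ∈ σ.cells,
      (1 + σ.wgt p.1 p.2) * (if σ.CanToggleIn I p then (1 : ℝ) else 0)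
      = ∑ i ∈ Finset.Icc 1 σ.a,
        (if σ.rmax I i < σ.lam i ∧ σ.rmax I i < σ.rmax I (i - 1)
          then 1 + σ.wgt i (σ.rmax I i + 1) else 0) := by
    have h1 : ∀ p ∈ σ.cells,
        (1 + σ.wgt p.1 p.2) * (if σ.CanToggleIn I p then (1 : ℝ) else 0)
        = if σ.CanToggleIn I p then (1 + σ.wgt p.1 p.2) else 0 := by
      intro p _
      by_cases h : σ.CanToggleIn I p <;> simp [h]
    rw [Finset.sum_congr rfl h1, ← Finset.sum_filter, σ.filter_in_eq hI,
      Finset.sum_image (by intro x _ y _ h; exact congrArg Prod.fst h),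
      Finset.sum_filter]
  rw [Finset.sum_add_distrib, hout, hin, ← Finset.sum_add_distrib]
  exact σ.perIdeal_bound hdef hI

lemma pr_eq (μ : Finset (ℕ × ℕ) → ℝ) (E : Finset (ℕ × ℕ) → Prop) :
    σ.pr μ E = ∑ I ∈ σ.idealsFinset, (if E I then μ I else 0) := by
  unfold pr
  rw [Finset.sum_filter]

end SkewShape

theorem SkewShape.expected_jaggedness_deficient' (σ : SkewShape) (hdef : σ.Deficient)
    (μ : Finset (ℕ × ℕ) → ℝ) (hμ : σ.IsProbDist μ) (hts : σ.ToggleSymmetric μ) :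
    σ.expect μ (fun I => (σ.jag I : ℝ)) ≤
      2 * (σ.a : ℝ) * (σ.b : ℝ) / ((σ.a : ℝ) + (σ.b : ℝ)) := by
  obtain ⟨hpos, hsum⟩ := hμ
  unfold expect
  have hdecomp : ∀ I ∈ σ.idealsFinset, μ I * (σ.jag I : ℝ)
      = μ I * (∑ p ∈ σ.cells,
          ((1 - σ.wgt p.1 p.2) * (if σ.CanToggleOut I p then (1 : ℝ) else 0)
            + (1 + σ.wgt p.1 p.2) * (if σ.CanToggleIn I p then (1 : ℝ) else 0)))
        + ∑ p ∈ σ.cells, σ.wgt p.1 p.2 *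
            ((if σ.CanToggleOut I p then μ I else 0)
              - (if σ.CanToggleIn I p then μ I else 0)) := by
    intro I _
    rw [σ.jag_decomp I, mul_add]
    congr 1
    rw [Finset.mul_sum]
    refine Finset.sum_congr rfl fun p _ => ?_
    by_cases h1 : σ.CanToggleOut I p <;> by_cases h2 : σ.CanToggleIn I p <;>
      simp [h1, h2] <;> ring
  rw [Finset.sum_congr rfl hdecomp, Finset.sum_add_distrib]
  have hD : ∑ I ∈ σ.idealsFinset, ∑ p ∈ σ.cells, σ.wgt p.1 p.2 *
      ((if σ.CanToggleOut I p then μ I else 0)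
        - (if σ.CanToggleIn I p then μ I else 0)) = 0 := by
    rw [Finset.sum_comm]
    refine Finset.sum_eq_zero fun p hp => ?_
    rw [← Finset.mul_sum, Finset.sum_sub_distrib]
    rw [← σ.pr_eq μ (fun I => σ.CanToggleOut I p), ← σ.pr_eq μ (fun I => σ.CanToggleIn I p)]
    rw [← hts p hp]
    ring
  rw [hD, add_zero]
  have hle : ∀ I ∈ σ.idealsFinset, μ I * (∑ p ∈ σ.cells,
      ((1 - σ.wgt p.1 p.2) * (if σ.CanToggleOut I p then (1 : ℝ) else 0)
        + (1 + σ.wgt p.1 p.2) * (if σ.CanToggleIn I p then (1 : ℝ) else 0)))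
      ≤ μ I * (2 * (σ.a : ℝ) * (σ.b : ℝ) / ((σ.a : ℝ) + (σ.b : ℝ))) := by
    intro I hIm
    have hI : σ.IsIdeal I := by
      unfold idealsFinset at hIm
      rw [Finset.mem_filter] at hIm
      exact hIm.2
    exact mul_le_mul_of_nonneg_left (σ.S_bound hdef hI) (hpos I)
  refine le_trans (Finset.sum_le_sum hle) ?_
  rw [← Finset.sum_mul, hsum, one_mul]
/-- Corollary 3.11, second part: for a deficient skew shape `σ` with
height `a` and width `b`, the expected jaggedness of a subshape with respect to any
toggle-symmetric probability distribution on `J(σ)` is at most `2ab/(a+b)`. -/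
theorem SkewShape.expected_jaggedness_deficient (σ : SkewShape) (hdef : σ.Deficient)
    (μ : Finset (ℕ × ℕ) → ℝ) (hμ : σ.IsProbDist μ) (hts : σ.ToggleSymmetric μ) :
    σ.expect μ (fun I => (σ.jag I : ℝ)) ≤
      2 * (σ.a : ℝ) * (σ.b : ℝ) / ((σ.a : ℝ) + (σ.b : ℝ)) := by
  exact SkewShape.expected_jaggedness_deficient' σ hdef μ hμ hts
end
end

section
/- Let σ be a balanced skew shape with height a and width b (a connected skew shape whose outward corners all have displacement δ(c) = 0), and let P_σ be the associated poset of boxes. Then the antichain cardinality statistic I ↦ #A(I) is (ab/(a+b))-mesic with respect to the action of rowmotion on J(P_σ): the average of #A(I) over every rowmotion-orbit equals ab/(a+b). -/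
open Finset
open scoped Classical

noncomputable section

namespace SkewShape

/-- The cardinality of the antichain `A(I)` of maximal elements of `I`
(with respect to the componentwise order on boxes). -/
def antichainCard (I : Finset (ℕ × ℕ)) : ℕ :=
  (I.filter fun p => ∀ q ∈ I, p ≤ q → q = p).card

end SkewShape

namespace SkewShape

variable (σ : SkewShape)

/-- The toggle `τ_p : J(σ) → J(σ)`: replace `I` by `I Δ {p}` whenever the latter is again
an order ideal of `P_σ`, and do nothing otherwise. -/
def toggle (p : ℕ × ℕ) (I : Finset (ℕ × ℕ)) : Finset (ℕ × ℕ) :=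
  if σ.IsIdeal (symmDiff I {p}) then symmDiff I {p} else I

/-- `L` lists the boxes of `σ` in the order `ℓ⁻¹(1), ℓ⁻¹(2), …, ℓ⁻¹(n)` for a linear
extension `ℓ` of `P_σ`: it enumerates each box exactly once, and no box is preceded by a
strictly larger box. -/
def IsLinExtList (L : List (ℕ × ℕ)) : Prop :=
  L.Nodup ∧ L.toFinset = σ.cells ∧ L.Pairwise fun p q => ¬(q ≤ p ∧ q ≠ p)

/-- Rowmotion with respect to the linear extension `L = [ℓ⁻¹(1),…,ℓ⁻¹(n)]`: the composite
`τ_{ℓ⁻¹(1)} ∘ τ_{ℓ⁻¹(2)} ∘ ⋯ ∘ τ_{ℓ⁻¹(n)}` (toggling from top to bottom). -/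
def rowmotion (L : List (ℕ × ℕ)) (I : Finset (ℕ × ℕ)) : Finset (ℕ × ℕ) :=
  L.foldr σ.toggle I

end SkewShape

namespace SkewShape

variable (σ : SkewShape)

lemma mem_cells_iff {q : ℕ × ℕ} :
    q ∈ σ.cells ↔ 1 ≤ q.1 ∧ q.1 ≤ σ.a ∧ σ.nu q.1 < q.2 ∧ q.2 ≤ σ.lam q.1 := by
  unfold cells
  simp only [Finset.mem_filter, Finset.mem_product, Finset.mem_Icc]
  constructor
  · rintro ⟨⟨⟨h1, h2⟩, _, _⟩, h5, h6⟩; exact ⟨h1, h2, h5, h6⟩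
  · rintro ⟨h1, h2, h5, h6⟩
    exact ⟨⟨⟨h1, h2⟩, Nat.lt_of_le_of_lt (Nat.zero_le _) h5,
      le_trans h6 (σ.lam_le_b _ h1 h2)⟩, h5, h6⟩

lemma mem_cells_mk {i j : ℕ} :
    (i, j) ∈ σ.cells ↔ 1 ≤ i ∧ i ≤ σ.a ∧ σ.nu i < j ∧ j ≤ σ.lam i :=
  σ.mem_cells_iff

lemma no_cell_below_of_up {k l : ℕ} (h : (k, l) ∉ σ.cells) (h2 : (k+1, l) ∈ σ.cells) :
    ∀ q ∈ σ.cells, ¬ q ≤ (k, l) := by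
  intro q hq hle
  rw [mem_cells_mk] at h2
  rw [mem_cells_iff] at hq
  rw [Prod.le_def] at hle
  rcases Nat.eq_zero_or_pos k with rfl | hk
  · omega
  have hka : k ≤ σ.a := le_trans (Nat.le_succ k) h2.2.1
  have hlam : l ≤ σ.lam k := le_trans h2.2.2.2 (σ.lam_anti k (k+1) hk (Nat.le_succ k) h2.2.1)
  have hnu : l ≤ σ.nu k := by
    by_contra hcon
    exact h (σ.mem_cells_mk.2 ⟨hk, hka, by omega, hlam⟩)
  have : σ.nu k ≤ σ.nu q.1 := σ.nu_anti q.1 k hq.1 hle.1 hka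
  omega

lemma no_cell_below_of_right {k l : ℕ} (h : (k, l) ∉ σ.cells) (h2 : (k, l+1) ∈ σ.cells) :
    ∀ q ∈ σ.cells, ¬ q ≤ (k, l) := by
  intro q hq hle
  rw [mem_cells_mk] at h2
  rw [mem_cells_iff] at hq
  rw [Prod.le_def] at hle
  have hnu : l ≤ σ.nu k := by
    by_contra hcon
    exact h (σ.mem_cells_mk.2 ⟨h2.1, h2.2.1, by omega, by omega⟩)
  have : σ.nu k ≤ σ.nu q.1 := σ.nu_anti q.1 k hq.1 hle.1 h2.2.1
  omega

lemma no_cell_above_of_up {k l : ℕ} (h : (k+1, l) ∉ σ.cells) (h2 : (k, l) ∈ σ.cells) :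
    ∀ q ∈ σ.cells, ¬ (k+1, l) ≤ q := by
  intro q hq hle
  rw [mem_cells_mk] at h2
  rw [mem_cells_iff] at hq
  rw [Prod.le_def] at hle
  rcases Nat.lt_or_ge σ.a (k+1) with hka | hka
  · omega
  have hnu : σ.nu (k+1) < l := lt_of_le_of_lt (σ.nu_anti k (k+1) h2.1 (Nat.le_succ k) hka) h2.2.2.1
  have hlam : σ.lam (k+1) < l := by
    by_contra hcon
    exact h (σ.mem_cells_mk.2 ⟨by omega, hka, hnu, by omega⟩)
  have : σ.lam q.1 ≤ σ.lam (k+1) := σ.lam_anti (k+1) q.1 (by omega) hle.1 hq.2.1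
  omega

lemma no_cell_above_of_left {k l : ℕ} (h : (k, l+1) ∉ σ.cells) (h2 : (k, l) ∈ σ.cells) :
    ∀ q ∈ σ.cells, ¬ (k, l+1) ≤ q := by
  intro q hq hle
  rw [mem_cells_mk] at h2
  rw [mem_cells_iff] at hq
  rw [Prod.le_def] at hle
  have hlam : σ.lam k ≤ l := by
    by_contra hcon
    exact h (σ.mem_cells_mk.2 ⟨h2.1, h2.2.1, by omega, by omega⟩)
  have : σ.lam q.1 ≤ σ.lam k := σ.lam_anti k q.1 h2.1 hle.1 hq.2.1
  omega

lemma below_split {q : ℕ × ℕ} {i j : ℕ} (h : q ≤ (i, j)) (hne : q ≠ (i, j)) :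
    q ≤ (i - 1, j) ∨ q ≤ (i, j - 1) := by
  rcases q with ⟨x, y⟩
  rw [Prod.mk_le_mk] at h
  rw [Ne, Prod.mk.injEq] at hne
  rw [Prod.mk_le_mk, Prod.mk_le_mk]
  omega

lemma above_split {q : ℕ × ℕ} {i j : ℕ} (h : (i, j) ≤ q) (hne : q ≠ (i, j)) :
    (i + 1, j) ≤ q ∨ (i, j + 1) ≤ q := by
  rcases q with ⟨x, y⟩
  rw [Prod.mk_le_mk] at h
  rw [Ne, Prod.mk.injEq] at hne
  rw [Prod.mk_le_mk, Prod.mk_le_mk]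
  omega

lemma IsIdeal.mem_of_le {I : Finset (ℕ × ℕ)} (hI : σ.IsIdeal I) {p q : ℕ × ℕ}
    (hp : p ∈ I) (hq : q ∈ σ.cells) (hle : q ≤ p) : q ∈ I := hI.2 p hp q hq hle

end SkewShape
namespace SkewShape

variable (σ : SkewShape)

/-- The weight used in the pointwise "jaggedness" identity. -/
def wt (p : ℕ × ℕ) : ℝ :=
  1 + ((σ.a : ℝ) * σ.b - σ.b * p.1 - σ.a * p.2) / ((σ.a : ℝ) + σ.b)

def maxSet (I : Finset (ℕ × ℕ)) : Finset (ℕ × ℕ) :=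
  I.filter fun p => ∀ q ∈ I, p ≤ q → q = p

def minCset (I : Finset (ℕ × ℕ)) : Finset (ℕ × ℕ) :=
  σ.cells.filter fun p => p ∉ I ∧ ∀ q ∈ σ.cells, q ≤ p → q ≠ p → q ∈ I

/-- The statistic that is constant over all order ideals of a balanced shape. -/
def Fst (I : Finset (ℕ × ℕ)) : ℝ :=
  (∑ q ∈ maxSet I, (1 - σ.wt q)) + ∑ q ∈ σ.minCset I, σ.wt q

lemma ha0 : ((σ.a : ℝ)) ≠ 0 := by
  have := σ.ha; positivity
lemma hb0 : ((σ.b : ℝ)) ≠ 0 := by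
  have := σ.hb; positivity
lemma hab0 : ((σ.a : ℝ) + σ.b) ≠ 0 := by
  have := σ.ha; have := σ.hb; positivity

lemma wt_right (i j : ℕ) : σ.wt (i, j + 1) = σ.wt (i, j) - (σ.a : ℝ) / ((σ.a : ℝ) + σ.b) := by
  have h := σ.hab0
  unfold wt
  push_cast
  field_simp
  ring

lemma wt_down (i j : ℕ) : σ.wt (i + 1, j) = σ.wt (i, j) - (σ.b : ℝ) / ((σ.a : ℝ) + σ.b) := by
  have h := σ.hab0
  unfold wt
  push_cast
  field_simp
  ring

lemma wt_up {i : ℕ} (j : ℕ) (hi : 1 ≤ i) :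
    σ.wt (i - 1, j) = σ.wt (i, j) + (σ.b : ℝ) / ((σ.a : ℝ) + σ.b) := by
  obtain ⟨k, rfl⟩ : ∃ k, i = k + 1 := ⟨i - 1, by omega⟩
  rw [σ.wt_down k j]
  simp

lemma wt_left {j : ℕ} (i : ℕ) (hj : 1 ≤ j) :
    σ.wt (i, j - 1) = σ.wt (i, j) + (σ.a : ℝ) / ((σ.a : ℝ) + σ.b) := by
  obtain ⟨k, rfl⟩ : ∃ k, j = k + 1 := ⟨j - 1, by omega⟩
  rw [σ.wt_right i k]
  simp

/-- Balanced corner relation, NW version. -/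
lemma nw_eq (hbal : σ.Balanced) {x y : ℕ} (h1 : (x+1, y) ∈ σ.cells)
    (h2 : (x, y+1) ∈ σ.cells) (h3 : (x, y) ∉ σ.cells) :
    (σ.b : ℝ) * x + (σ.a : ℝ) * y = (σ.a : ℝ) * σ.b := by
  have hc : (x, y) ∈ σ.nwCorners := by
    unfold nwCorners
    rw [Finset.mem_filter, Finset.mem_product, Finset.mem_range, Finset.mem_range]
    refine ⟨⟨?_, ?_⟩, h1, h2, h3⟩
    · have := σ.mem_cells_mk.1 h1; omega
    · have h := σ.mem_cells_mk.1 h2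
      have := σ.lam_le_b x h.1 h.2.1
      omega
  have hd := hbal.2.1 _ hc
  unfold nwDisp at hd
  have ha := σ.ha0; have hb := σ.hb0
  field_simp at hd
  linarith

/-- Balanced corner relation, SE version. -/
lemma se_eq (hbal : σ.Balanced) {x y : ℕ} (h1 : (x+1, y) ∈ σ.cells)
    (h2 : (x, y+1) ∈ σ.cells) (h3 : (x+1, y+1) ∉ σ.cells) :
    (σ.b : ℝ) * x + (σ.a : ℝ) * y = (σ.a : ℝ) * σ.b := by
  have hc : (x, y) ∈ σ.seCorners := by
    unfold seCorners
    rw [Finset.mem_filter, Finset.mem_product, Finset.mem_range, Finset.mem_range]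
    refine ⟨⟨?_, ?_⟩, h1, h2, h3⟩
    · have := σ.mem_cells_mk.1 h1; omega
    · have h := σ.mem_cells_mk.1 h2
      have := σ.lam_le_b x h.1 h.2.1
      omega
  have hd := hbal.2.2 _ hc
  unfold seDisp at hd
  have ha := σ.ha0; have hb := σ.hb0
  field_simp at hd
  linarith

lemma wt_eq_A {i j : ℕ} (h : (σ.b : ℝ) * i + (σ.a : ℝ) * j = (σ.a : ℝ) * σ.b + σ.b) :
    σ.wt (i, j) = (σ.a : ℝ) / ((σ.a : ℝ) + σ.b) := by
  have hab := σ.hab0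
  unfold wt
  rw [show ((σ.a : ℝ) * σ.b - σ.b * (i, j).1 - σ.a * (i, j).2) = -σ.b by
    simp only; push_cast; linarith]
  field_simp
  ring

lemma wt_eq_B {i j : ℕ} (h : (σ.b : ℝ) * i + (σ.a : ℝ) * j = (σ.a : ℝ) * σ.b + σ.a) :
    σ.wt (i, j) = (σ.b : ℝ) / ((σ.a : ℝ) + σ.b) := by
  have hab := σ.hab0
  unfold wt
  rw [show ((σ.a : ℝ) * σ.b - σ.b * (i, j).1 - σ.a * (i, j).2) = -σ.a by
    simp only; push_cast; linarith]
  field_simp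
  ring

end SkewShape
namespace SkewShape

variable (σ : SkewShape)

lemma mem_maxSet {I : Finset (ℕ × ℕ)} {x : ℕ × ℕ} :
    x ∈ maxSet I ↔ x ∈ I ∧ ∀ q ∈ I, x ≤ q → q = x := Finset.mem_filter

lemma mem_minCset {I : Finset (ℕ × ℕ)} {x : ℕ × ℕ} :
    x ∈ σ.minCset I ↔ x ∈ σ.cells ∧ x ∉ I ∧ ∀ q ∈ σ.cells, q ≤ x → q ≠ x → q ∈ I :=
  Finset.mem_filter

section KeyStep

variable {J : Finset (ℕ × ℕ)} {i j : ℕ}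
variable (hJ : σ.IsIdeal J) (hp : (i+1, j+1) ∈ σ.cells) (hpJ : (i+1, j+1) ∉ J)
variable (hmin : ∀ q ∈ σ.cells, q ≤ (i+1, j+1) → q ≠ (i+1, j+1) → q ∈ J)

include hJ hp hpJ hmin

/-- χ1 : the box above `p` is maximal in `J` iff it is a box and the box NE of `p` is not
in `J`. -/
lemma chi1 : (i, j+1) ∈ maxSet J ↔ ((i, j+1) ∈ σ.cells ∧ (i, j+2) ∉ J) := by
  constructor
  · intro h
    rw [mem_maxSet] at h
    refine ⟨hJ.1 h.1, fun hdp => ?_⟩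
    have h2 := h.2 _ hdp (by simp [Prod.mk_le_mk])
    rw [Prod.mk.injEq] at h2
    omega
  · rintro ⟨huc, hdp⟩
    have huJ : (i, j+1) ∈ J := hmin _ huc (by simp [Prod.mk_le_mk]) (by simp)
    rw [mem_maxSet]
    refine ⟨huJ, fun q hq hle => ?_⟩
    by_contra hne
    rcases above_split hle hne with hle2 | hle2
    · exact hpJ (hJ.2 q hq _ hp hle2)
    · by_cases hdpc : (i, j+2) ∈ σ.cells
      · exact hdp (hJ.2 q hq _ hdpc hle2)
      · exact σ.no_cell_above_of_left hdpc huc q (hJ.1 hq) hle2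

/-- χ2 : the box left of `p` is maximal in `J` iff it is a box and the box SW of `p` is
not in `J`. -/
lemma chi2 : (i+1, j) ∈ maxSet J ↔ ((i+1, j) ∈ σ.cells ∧ (i+2, j) ∉ J) := by
  constructor
  · intro h
    rw [mem_maxSet] at h
    refine ⟨hJ.1 h.1, fun hdm => ?_⟩
    have h2 := h.2 _ hdm (by simp [Prod.mk_le_mk])
    rw [Prod.mk.injEq] at h2
    omega
  · rintro ⟨hvc, hdm⟩
    have hvJ : (i+1, j) ∈ J := hmin _ hvc (by simp [Prod.mk_le_mk]) (by simp)
    rw [mem_maxSet]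
    refine ⟨hvJ, fun q hq hle => ?_⟩
    by_contra hne
    rcases above_split hle hne with hle2 | hle2
    · by_cases hdmc : (i+2, j) ∈ σ.cells
      · exact hdm (hJ.2 q hq _ hdmc hle2)
      · exact σ.no_cell_above_of_up hdmc hvc q (hJ.1 hq) hle2
    · exact hpJ (hJ.2 q hq _ hp hle2)

/-- χ3 : new-minimality condition for the box right of `p`. -/
lemma chi3 :
    ((i+1, j+2) ∈ σ.cells ∧ ∀ r ∈ σ.cells, r ≤ (i+1, j+2) → r ≠ (i+1, j+2) →
        r ≠ (i+1, j+1) → r ∈ J) ↔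
    ((i+1, j+2) ∈ σ.cells ∧ ((i, j+2) ∈ J ∨ (i, j+2) ∉ σ.cells)) := by
  constructor
  · rintro ⟨hv'c, hr⟩
    refine ⟨hv'c, ?_⟩
    by_cases hdpc : (i, j+2) ∈ σ.cells
    · exact Or.inl (hr _ hdpc (by simp [Prod.mk_le_mk]) (by simp) (by simp))
    · exact Or.inr hdpc
  · rintro ⟨hv'c, hor⟩
    refine ⟨hv'c, fun r hrc hrle hrne hrnp => ?_⟩
    rcases below_split hrle hrne with hle2 | hle2
    · simp only [Nat.add_sub_cancel, show i+2-1 = i+1 from rfl, show j+2-1 = j+1 from rfl] at hle2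
      rcases hor with hdp | hdp
      · exact hJ.2 _ hdp _ hrc hle2
      · exact absurd hle2 (σ.no_cell_below_of_up hdp hv'c r hrc)
    · simp only [Nat.add_sub_cancel, show i+2-1 = i+1 from rfl, show j+2-1 = j+1 from rfl] at hle2
      exact hmin r hrc hle2 hrnp

/-- χ4 : new-minimality condition for the box below `p`. -/
lemma chi4 :
    ((i+2, j+1) ∈ σ.cells ∧ ∀ r ∈ σ.cells, r ≤ (i+2, j+1) → r ≠ (i+2, j+1) →
        r ≠ (i+1, j+1) → r ∈ J) ↔
    ((i+2, j+1) ∈ σ.cells ∧ ((i+2, j) ∈ J ∨ (i+2, j) ∉ σ.cells)) := by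
  constructor
  · rintro ⟨hu'c, hr⟩
    refine ⟨hu'c, ?_⟩
    by_cases hdmc : (i+2, j) ∈ σ.cells
    · exact Or.inl (hr _ hdmc (by simp [Prod.mk_le_mk]) (by simp) (by simp))
    · exact Or.inr hdmc
  · rintro ⟨hu'c, hor⟩
    refine ⟨hu'c, fun r hrc hrle hrne hrnp => ?_⟩
    rcases below_split hrle hrne with hle2 | hle2
    · simp only [Nat.add_sub_cancel, show i+2-1 = i+1 from rfl, show j+2-1 = j+1 from rfl] at hle2
      exact hmin r hrc hle2 hrnp
    · simp only [Nat.add_sub_cancel, show i+2-1 = i+1 from rfl, show j+2-1 = j+1 from rfl] at hle2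
      rcases hor with hdm | hdm
      · exact hJ.2 _ hdm _ hrc hle2
      · exact absurd hle2 (σ.no_cell_below_of_right hdm hu'c r hrc)

end KeyStep

end SkewShape
namespace SkewShape

variable (σ : SkewShape)

section KeyStep2

variable {J : Finset (ℕ × ℕ)} {i j : ℕ}
variable (hJ : σ.IsIdeal J) (hp : (i+1, j+1) ∈ σ.cells) (hpJ : (i+1, j+1) ∉ J)
variable (hmin : ∀ q ∈ σ.cells, q ≤ (i+1, j+1) → q ≠ (i+1, j+1) → q ∈ J)

include hJ hp hpJ hmin

lemma claimP (hbal : σ.Balanced) :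
    -(if (i, j+1) ∈ maxSet J then (1 - σ.wt (i, j+1)) else 0)
      + (if ((i+1, j+2) ∈ σ.cells ∧ ∀ r ∈ σ.cells, r ≤ (i+1, j+2) → r ≠ (i+1, j+2) →
            r ≠ (i+1, j+1) → r ∈ J) then σ.wt (i+1, j+2) else 0)
    = σ.wt (i+1, j+1) - (σ.a : ℝ) / ((σ.a : ℝ) + σ.b) := by
  have hab := σ.hab0
  have hA : (σ.a : ℝ)/((σ.a : ℝ)+σ.b) + (σ.b : ℝ)/((σ.a : ℝ)+σ.b) = 1 := by field_simp
  rw [if_congr (σ.chi1 hJ hp hpJ hmin) rfl rfl, if_congr (σ.chi3 hJ hp hpJ hmin) rfl rfl]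
  have hwv' : σ.wt (i+1, j+2) = σ.wt (i+1, j+1) - (σ.a : ℝ)/((σ.a : ℝ)+σ.b) :=
    σ.wt_right (i+1) (j+1)
  have hwu : σ.wt (i, j+1) = σ.wt (i+1, j+1) + (σ.b : ℝ)/((σ.a : ℝ)+σ.b) := by
    have := σ.wt_down i (j+1); linarith
  by_cases hdpJ : (i, j+2) ∈ J
  · rw [if_neg (by tauto : ¬((i, j+1) ∈ σ.cells ∧ (i, j+2) ∉ J))]
    by_cases hv'c : (i+1, j+2) ∈ σ.cells
    · rw [if_pos ⟨hv'c, Or.inl hdpJ⟩]; linarith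
    · rw [if_neg (by tauto)]
      have hse := σ.se_eq hbal (x := i) (y := j+1) hp (hJ.1 hdpJ) hv'c
      have hw : σ.wt (i+1, j+1) = (σ.a : ℝ)/((σ.a : ℝ)+σ.b) := by
        apply σ.wt_eq_A
        push_cast at hse ⊢
        linarith
      linarith
  · by_cases hdpc : (i, j+2) ∈ σ.cells
    · rw [if_neg (by tauto : ¬((i+1, j+2) ∈ σ.cells ∧ ((i, j+2) ∈ J ∨ (i, j+2) ∉ σ.cells)))]
      by_cases huc : (i, j+1) ∈ σ.cells
      · rw [if_pos ⟨huc, hdpJ⟩]; linarith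
      · rw [if_neg (by tauto)]
        have hnw := σ.nw_eq hbal (x := i) (y := j+1) hp hdpc huc
        have hw : σ.wt (i+1, j+1) = (σ.a : ℝ)/((σ.a : ℝ)+σ.b) := by
          apply σ.wt_eq_A
          push_cast at hnw ⊢
          linarith
        linarith
    · by_cases huc : (i, j+1) ∈ σ.cells
      · by_cases hv'c : (i+1, j+2) ∈ σ.cells
        · exfalso
          apply hdpc
          rw [mem_cells_mk] at huc hv'c ⊢
          have hl : σ.lam (i+1) ≤ σ.lam i := σ.lam_anti i (i+1) huc.1 (Nat.le_succ i) hv'c.2.1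
          exact ⟨huc.1, huc.2.1, by omega, by omega⟩
        · rw [if_pos ⟨huc, hdpJ⟩, if_neg (by tauto)]; linarith
      · rw [if_neg (by tauto)]
        by_cases hv'c : (i+1, j+2) ∈ σ.cells
        · rw [if_pos ⟨hv'c, Or.inr hdpc⟩]; linarith
        · rw [if_neg (by tauto)]
          obtain ⟨hpc1, hpc2, hpc3, hpc4⟩ := σ.mem_cells_mk.1 hp
          rw [mem_cells_mk] at huc hv'c
          push_neg at huc hv'c
          have hlam1 : σ.lam (i+1) = j + 1 := by
            have := hv'c (by omega) hpc2 (by omega)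
            omega
          have hw : σ.wt (i+1, j+1) = (σ.a : ℝ)/((σ.a : ℝ)+σ.b) := by
            apply σ.wt_eq_A
            rcases Nat.eq_zero_or_pos i with rfl | hi1
            · have hb1 : j + 1 = σ.b := by
                have h01 : σ.lam (0+1) = σ.lam 1 := by norm_num
                have := σ.lam_one
                omega
              have hbr : ((j : ℝ) + 1) = σ.b := by exact_mod_cast hb1
              push_cast
              rw [hbr]
              ring
            · exfalso
              have hilea : i ≤ σ.a := by omega
              have hll : j + 1 ≤ σ.lam i :=
                hlam1 ▸ σ.lam_anti i (i+1) hi1 (Nat.le_succ i) hpc2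
              have hnui : j + 1 ≤ σ.nu i := by
                rcases Nat.lt_or_ge (σ.nu i) (j+1) with h | h
                · have := huc hi1 hilea h
                  omega
                · omega
              have := σ.conn_nu_lt_lam hbal.1 hi1 (by omega)
              omega
          linarith

lemma claimM (hbal : σ.Balanced) :
    -(if (i+1, j) ∈ maxSet J then (1 - σ.wt (i+1, j)) else 0)
      + (if ((i+2, j+1) ∈ σ.cells ∧ ∀ r ∈ σ.cells, r ≤ (i+2, j+1) → r ≠ (i+2, j+1) →
            r ≠ (i+1, j+1) → r ∈ J) then σ.wt (i+2, j+1) else 0)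
    = σ.wt (i+1, j+1) - (σ.b : ℝ) / ((σ.a : ℝ) + σ.b) := by
  have hab := σ.hab0
  have hA : (σ.a : ℝ)/((σ.a : ℝ)+σ.b) + (σ.b : ℝ)/((σ.a : ℝ)+σ.b) = 1 := by field_simp
  rw [if_congr (σ.chi2 hJ hp hpJ hmin) rfl rfl, if_congr (σ.chi4 hJ hp hpJ hmin) rfl rfl]
  have hwu' : σ.wt (i+2, j+1) = σ.wt (i+1, j+1) - (σ.b : ℝ)/((σ.a : ℝ)+σ.b) :=
    σ.wt_down (i+1) (j+1)
  have hwv : σ.wt (i+1, j) = σ.wt (i+1, j+1) + (σ.a : ℝ)/((σ.a : ℝ)+σ.b) := by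
    have := σ.wt_right (i+1) j; linarith
  by_cases hdmJ : (i+2, j) ∈ J
  · rw [if_neg (by tauto : ¬((i+1, j) ∈ σ.cells ∧ (i+2, j) ∉ J))]
    by_cases hu'c : (i+2, j+1) ∈ σ.cells
    · rw [if_pos ⟨hu'c, Or.inl hdmJ⟩]; linarith
    · rw [if_neg (by tauto)]
      have hse := σ.se_eq hbal (x := i+1) (y := j) (hJ.1 hdmJ) hp hu'c
      have hw : σ.wt (i+1, j+1) = (σ.b : ℝ)/((σ.a : ℝ)+σ.b) := by
        apply σ.wt_eq_B
        push_cast at hse ⊢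
        linarith
      linarith
  · by_cases hdmc : (i+2, j) ∈ σ.cells
    · rw [if_neg (by tauto : ¬((i+2, j+1) ∈ σ.cells ∧ ((i+2, j) ∈ J ∨ (i+2, j) ∉ σ.cells)))]
      by_cases hvc : (i+1, j) ∈ σ.cells
      · rw [if_pos ⟨hvc, hdmJ⟩]; linarith
      · rw [if_neg (by tauto)]
        have hnw := σ.nw_eq hbal (x := i+1) (y := j) hdmc hp hvc
        have hw : σ.wt (i+1, j+1) = (σ.b : ℝ)/((σ.a : ℝ)+σ.b) := by
          apply σ.wt_eq_B
          push_cast at hnw ⊢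
          linarith
        linarith
    · by_cases hvc : (i+1, j) ∈ σ.cells
      · by_cases hu'c : (i+2, j+1) ∈ σ.cells
        · exfalso
          apply hdmc
          rw [mem_cells_mk] at hvc hu'c ⊢
          have hn : σ.nu (i+2) ≤ σ.nu (i+1) :=
            σ.nu_anti (i+1) (i+2) (by omega) (by omega) hu'c.2.1
          exact ⟨by omega, hu'c.2.1, by omega, by omega⟩
        · rw [if_pos ⟨hvc, hdmJ⟩, if_neg (by tauto)]; linarith
      · rw [if_neg (by tauto)]
        by_cases hu'c : (i+2, j+1) ∈ σ.cells
        · rw [if_pos ⟨hu'c, Or.inr hdmc⟩]; linarith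
        · rw [if_neg (by tauto)]
          obtain ⟨hpc1, hpc2, hpc3, hpc4⟩ := σ.mem_cells_mk.1 hp
          rw [mem_cells_mk] at hvc hu'c
          push_neg at hvc hu'c
          have hnu1 : σ.nu (i+1) = j := by
            rcases Nat.lt_or_ge (σ.nu (i+1)) j with h | h
            · have := hvc (by omega) hpc2 h
              omega
            · omega
          have hw : σ.wt (i+1, j+1) = (σ.b : ℝ)/((σ.a : ℝ)+σ.b) := by
            apply σ.wt_eq_B
            rcases Nat.lt_or_ge σ.a (i+2) with ha2 | ha2
            · have hia : i + 1 = σ.a := by omega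
              have hj0 : j = 0 := by
                rw [hia, σ.nu_a] at hnu1
                omega
              subst hj0
              have har : ((i : ℝ) + 1) = σ.a := by exact_mod_cast hia
              push_cast
              rw [har]
              ring
            · exfalso
              have hnu2 : σ.nu (i+2) ≤ σ.nu (i+1) :=
                σ.nu_anti (i+1) (i+2) (by omega) (by omega) ha2
              have hll : σ.lam (i+2) ≤ j := by
                rcases Nat.lt_or_ge (σ.nu (i+2)) (j+1) with h | h
                · have := hu'c (by omega) ha2 h
                  omega
                · omega
              have hcc := σ.conn_nu_lt_lam hbal.1 (show 1 ≤ i+1 by omega) (by omega)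
              have h12 : i+1+1 = i+2 := rfl
              rw [h12] at hcc
              omega
          linarith

end KeyStep2

end SkewShape
namespace SkewShape

lemma pair_ne {a b c d : ℕ} (h : a ≠ c ∨ b ≠ d) : (a, b) ≠ (c, d) := by
  intro he
  rw [Prod.mk.injEq] at he
  tauto

lemma sum_erase_sub (s : Finset (ℕ × ℕ)) (f : ℕ × ℕ → ℝ) (x : ℕ × ℕ) :
    ∑ y ∈ s.erase x, f y = ∑ y ∈ s, f y - (if x ∈ s then f x else 0) := by
  by_cases h : x ∈ s
  · rw [if_pos h, Finset.sum_erase_eq_sub h]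
  · rw [if_neg h, Finset.erase_eq_of_notMem h, sub_zero]

variable (σ : SkewShape)

section KeyStep3

variable {J : Finset (ℕ × ℕ)} {i j : ℕ}
variable (hJ : σ.IsIdeal J) (hp : (i+1, j+1) ∈ σ.cells) (hpJ : (i+1, j+1) ∉ J)
variable (hmin : ∀ q ∈ σ.cells, q ≤ (i+1, j+1) → q ≠ (i+1, j+1) → q ∈ J)

include hJ hp hpJ hmin

lemma maxSet_insert :
    maxSet (insert (i+1, j+1) J)
      = insert (i+1, j+1) (((maxSet J).erase (i, j+1)).erase (i+1, j)) := by
  ext x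
  simp only [mem_maxSet, Finset.mem_insert, Finset.mem_erase]
  constructor
  · rintro ⟨hx, hmax⟩
    rcases hx with rfl | hxJ
    · exact Or.inl rfl
    · have hne : ∀ y : ℕ × ℕ, y ≤ (i+1, j+1) → y ≠ (i+1, j+1) → x ≠ y := by
        rintro y hyle hyne rfl
        exact hyne (hmax _ (Or.inl rfl) hyle).symm
      refine Or.inr ⟨hne _ (by simp [Prod.mk_le_mk]) (pair_ne (Or.inr (by omega))),
        hne _ (by simp [Prod.mk_le_mk]) (pair_ne (Or.inl (by omega))),
        hxJ, fun q hq hle => hmax q (Or.inr hq) hle⟩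
  · rintro (rfl | ⟨hnv, hnu, hxJ, hxmax⟩)
    · refine ⟨Or.inl rfl, fun q hq hle => ?_⟩
      rcases hq with rfl | hqJ
      · rfl
      · exact absurd (hJ.2 q hqJ _ hp hle) hpJ
    · refine ⟨Or.inr hxJ, fun q hq hle => ?_⟩
      rcases hq with rfl | hqJ
      · exfalso
        have hxp : x ≠ (i+1, j+1) := by
          rintro rfl
          exact hpJ hxJ
        rcases below_split hle hxp with h2 | h2 <;>
          simp only [Nat.add_sub_cancel] at h2
        · by_cases huc : (i, j+1) ∈ σ.cells
          · have huJ : (i, j+1) ∈ J :=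
              hmin _ huc (by simp [Prod.mk_le_mk]) (pair_ne (Or.inl (by omega)))
            exact hnu (hxmax _ huJ h2).symm
          · exact σ.no_cell_below_of_up huc hp x (hJ.1 hxJ) h2
        · by_cases hvc : (i+1, j) ∈ σ.cells
          · have hvJ : (i+1, j) ∈ J :=
              hmin _ hvc (by simp [Prod.mk_le_mk]) (pair_ne (Or.inr (by omega)))
            exact hnv (hxmax _ hvJ h2).symm
          · exact σ.no_cell_below_of_right hvc hp x (hJ.1 hxJ) h2
      · exact hxmax q hqJ hle

lemma minCset_insert :
    σ.minCset (insert (i+1, j+1) J)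
      = (({(i+2, j+1), (i+1, j+2)} : Finset (ℕ × ℕ)).filter
          (fun q => q ∈ σ.cells ∧ ∀ r ∈ σ.cells, r ≤ q → r ≠ q → r ≠ (i+1, j+1) → r ∈ J))
        ∪ (σ.minCset J).erase (i+1, j+1) := by
  ext x
  simp only [mem_minCset, Finset.mem_union, Finset.mem_erase, Finset.mem_filter,
    Finset.mem_insert, Finset.mem_singleton]
  constructor
  · rintro ⟨hxc, hxni, hxmin⟩
    push_neg at hxni
    by_cases hple : (i+1, j+1) ≤ x
    · left
      have hchoose : x = (i+2, j+1) ∨ x = (i+1, j+2) := by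
        rcases above_split hple hxni.1 with h2 | h2
        · left
          by_cases hu'c : (i+2, j+1) ∈ σ.cells
          · by_contra hne
            rcases hxmin _ hu'c h2 (fun he => hne he.symm) with he | hmem
            · exact (pair_ne (Or.inl (by omega))) he
            · exact hpJ (hJ.2 _ hmem _ hp (by simp [Prod.mk_le_mk]))
          · exact absurd h2 (σ.no_cell_above_of_up hu'c hp x hxc)
        · right
          by_cases hv'c : (i+1, j+2) ∈ σ.cells
          · by_contra hne
            rcases hxmin _ hv'c h2 (fun he => hne he.symm) with he | hmem
            · exact (pair_ne (Or.inr (by omega))) he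
            · exact hpJ (hJ.2 _ hmem _ hp (by simp [Prod.mk_le_mk]))
          · exact absurd h2 (σ.no_cell_above_of_left hv'c hp x hxc)
      refine ⟨hchoose, hxc, fun r hr hrle hrne hrnp => ?_⟩
      rcases hxmin r hr hrle hrne with he | hmem
      · exact absurd he hrnp
      · exact hmem
    · right
      refine ⟨hxni.1, hxc, hxni.2, fun q hq hle hne => ?_⟩
      rcases hxmin q hq hle hne with rfl | hmem
      · exact absurd hle hple
      · exact hmem
  · rintro (⟨hpair, hxc, hcond⟩ | ⟨hxnp, hxc, hxnJ, hxmin⟩)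
    · have hplex : (i+1, j+1) ≤ x ∧ x ≠ (i+1, j+1) := by
        rcases hpair with rfl | rfl
        · exact ⟨by simp [Prod.mk_le_mk], pair_ne (Or.inl (by omega))⟩
        · exact ⟨by simp [Prod.mk_le_mk], pair_ne (Or.inr (by omega))⟩
      refine ⟨hxc, ?_, fun r hr hrle hrne => ?_⟩
      · rintro (he | hmem)
        · exact hplex.2 he
        · exact hpJ (hJ.2 _ hmem _ hp hplex.1)
      · by_cases hrp : r = (i+1, j+1)
        · exact Or.inl hrp
        · exact Or.inr (hcond r hr hrle hrne hrp)
    · refine ⟨hxc, ?_, fun q hq hle hne => Or.inr (hxmin q hq hle hne)⟩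
      rintro (he | hmem)
      · exact hxnp he
      · exact hxnJ hmem

lemma key_step (hbal : σ.Balanced) : σ.Fst (insert (i+1, j+1) J) = σ.Fst J := by
  have hab := σ.hab0
  have hA : (σ.a : ℝ)/((σ.a : ℝ)+σ.b) + (σ.b : ℝ)/((σ.a : ℝ)+σ.b) = 1 := by field_simp
  have hpmaxJ : (i+1, j+1) ∉ maxSet J := fun h => hpJ (Finset.mem_filter.1 h).1
  have hpmem : (i+1, j+1) ∉ ((maxSet J).erase (i, j+1)).erase (i+1, j) :=
    fun h => hpmaxJ (Finset.mem_of_mem_erase (Finset.mem_of_mem_erase h))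
  have hpmin : (i+1, j+1) ∈ σ.minCset J := σ.mem_minCset.2 ⟨hp, hpJ, hmin⟩
  have hdisj : Disjoint
      (({(i+2, j+1), (i+1, j+2)} : Finset (ℕ × ℕ)).filter
          (fun q => q ∈ σ.cells ∧ ∀ r ∈ σ.cells, r ≤ q → r ≠ q → r ≠ (i+1, j+1) → r ∈ J))
      ((σ.minCset J).erase (i+1, j+1)) := by
    rw [Finset.disjoint_left]
    intro x hx1 hx2
    rw [Finset.mem_filter, Finset.mem_insert, Finset.mem_singleton] at hx1
    have hplex : (i+1, j+1) ≤ x ∧ x ≠ (i+1, j+1) := by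
      rcases hx1.1 with rfl | rfl
      · exact ⟨by simp [Prod.mk_le_mk], pair_ne (Or.inl (by omega))⟩
      · exact ⟨by simp [Prod.mk_le_mk], pair_ne (Or.inr (by omega))⟩
    have hx3 := (σ.mem_minCset.1 (Finset.mem_of_mem_erase hx2)).2.2
    exact hpJ (hx3 _ hp hplex.1 (fun he => hplex.2 he.symm))
  unfold Fst
  rw [σ.maxSet_insert hJ hp hpJ hmin, σ.minCset_insert hJ hp hpJ hmin]
  rw [Finset.sum_union hdisj, Finset.sum_insert hpmem]
  rw [sum_erase_sub _ _ (i+1, j), sum_erase_sub _ _ (i, j+1)]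
  rw [Finset.sum_erase_eq_sub hpmin]
  have hvu : ((i+1, j) ∈ (maxSet J).erase (i, j+1)) ↔ ((i+1, j) ∈ maxSet J) := by
    rw [Finset.mem_erase]
    simp only [and_iff_right_iff_imp]
    intro _
    exact pair_ne (Or.inl (by omega))
  rw [if_congr hvu rfl rfl]
  rw [Finset.sum_filter, Finset.sum_pair (pair_ne (Or.inr (by omega)))]
  have hcP := σ.claimP hJ hp hpJ hmin hbal
  have hcM := σ.claimM hJ hp hpJ hmin hbal
  linarith [hcP, hcM]

end KeyStep3

end SkewShape
namespace SkewShape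

variable (σ : SkewShape)

lemma telescope (h : ℕ → ℝ) : ∀ n : ℕ, ∑ i ∈ Finset.Icc 1 n, (h (i-1) - h i) = h 0 - h n := by
  intro n
  induction n with
  | zero => simp
  | succ n ih =>
    rw [Finset.sum_Icc_succ_top (by omega : 1 ≤ n + 1), ih]
    simp only [Nat.add_sub_cancel]
    ring

lemma minCset_empty :
    σ.minCset ∅ = ((Finset.Icc 1 σ.a).filter fun k => k = 1 ∨ σ.nu k < σ.nu (k-1)).image
      (fun k => (k, σ.nu k + 1)) := by
  ext x
  rw [mem_minCset, Finset.mem_image]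
  constructor
  · rintro ⟨hxc, -, hxmin⟩
    have hxmin' : ∀ q ∈ σ.cells, q ≤ x → q = x := by
      intro q hq hle
      by_contra hne
      exact absurd (hxmin q hq hle hne) (Finset.notMem_empty q)
    obtain ⟨k, l⟩ := x
    rw [mem_cells_mk] at hxc
    have hl : l = σ.nu k + 1 := by
      by_contra hne
      have hcell : (k, l-1) ∈ σ.cells := σ.mem_cells_mk.2 ⟨hxc.1, hxc.2.1, by omega, by omega⟩
      have h2 := hxmin' _ hcell (by rw [Prod.mk_le_mk]; omega)
      rw [Prod.mk.injEq] at h2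
      omega
    subst hl
    refine ⟨k, Finset.mem_filter.2 ⟨Finset.mem_Icc.2 ⟨hxc.1, hxc.2.1⟩, ?_⟩, rfl⟩
    by_contra hcon
    push_neg at hcon
    have hk2 : 2 ≤ k := by omega
    have hnle : σ.nu (k-1) = σ.nu k := by
      have := σ.nu_anti (k-1) k (by omega) (by omega) hxc.2.1
      omega
    have hcell : (k-1, σ.nu k + 1) ∈ σ.cells := by
      rw [mem_cells_mk]
      have hll : σ.lam k ≤ σ.lam (k-1) := σ.lam_anti (k-1) k (by omega) (by omega) hxc.2.1
      exact ⟨by omega, by omega, by omega, by omega⟩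
    have h2 := hxmin' _ hcell (by rw [Prod.mk_le_mk]; omega)
    rw [Prod.mk.injEq] at h2
    omega
  · rintro ⟨k, hk, rfl⟩
    rw [Finset.mem_filter, Finset.mem_Icc] at hk
    obtain ⟨⟨hk1, hka⟩, hcond⟩ := hk
    have hxc : (k, σ.nu k + 1) ∈ σ.cells :=
      σ.mem_cells_mk.2 ⟨hk1, hka, Nat.lt_succ_self _, σ.nu_lt_lam k hk1 hka⟩
    refine ⟨hxc, Finset.notMem_empty _, fun q hq hle hne => ?_⟩
    exfalso
    rcases below_split hle hne with h2 | h2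
    · rw [mem_cells_iff] at hq
      rw [Prod.le_def] at h2
      rcases hcond with rfl | hcond
      · omega
      · have h3 : σ.nu (k-1) ≤ σ.nu q.1 := σ.nu_anti q.1 (k-1) hq.1 h2.1 (by omega)
        omega
    · have hnc : (k, σ.nu k) ∉ σ.cells := by
        rw [mem_cells_mk]
        omega
      exact σ.no_cell_below_of_right hnc hxc q hq h2

lemma Fst_empty (hbal : σ.Balanced) :
    σ.Fst ∅ = (σ.a : ℝ) * σ.b / ((σ.a : ℝ) + σ.b) := by
  have hab := σ.hab0
  have hmax : maxSet (∅ : Finset (ℕ × ℕ)) = ∅ := rfl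
  unfold Fst
  rw [hmax, Finset.sum_empty, zero_add, σ.minCset_empty]
  rw [Finset.sum_image (by intro x _ y _ he; rw [Prod.mk.injEq] at he; exact he.1)]
  rw [Finset.sum_filter]
  set h : ℕ → ℝ := fun k =>
    (σ.a : ℝ) * (if k = 0 then (σ.b : ℝ) else (σ.nu k : ℝ)) / ((σ.a : ℝ) + σ.b) with hh
  have hstep : ∀ k ∈ Finset.Icc 1 σ.a,
      (if k = 1 ∨ σ.nu k < σ.nu (k-1) then σ.wt (k, σ.nu k + 1) else 0) = h (k-1) - h k := by
    intro k hk
    rw [Finset.mem_Icc] at hk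
    rcases Nat.eq_or_lt_of_le hk.1 with h1 | h2
    · -- k = 1
      rw [if_pos (Or.inl h1.symm), ← h1]
      simp only [hh, Nat.sub_self, if_pos rfl, if_neg (by omega : ¬ (1:ℕ) = 0)]
      unfold wt
      push_cast
      field_simp
      ring
    · -- k ≥ 2
      obtain ⟨m, rfl⟩ : ∃ m, k = m + 2 := ⟨k - 2, by omega⟩
      have hm1 : m + 2 - 1 = m + 1 := rfl
      rw [hm1]
      simp only [hh, if_neg (by omega : ¬ m + 2 = 0), if_neg (by omega : ¬ m + 1 = 0)]
      have hmono := σ.nu_anti (m+1) (m+2) (by omega) (by omega) hk.2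
      rcases Nat.eq_or_lt_of_le hmono with heq | hlt
      · rw [if_neg (by omega)]
        rw [heq]
        ring
      · rw [if_pos (Or.inr (by omega))]
        -- NW corner at (m+1, nu (m+1))
        have hconn : σ.nu (m+1) < σ.lam (m+2) :=
          σ.conn_nu_lt_lam hbal.1 (show 1 ≤ m+1 by omega) (by omega)
        have hc1 : (m+1+1, σ.nu (m+1)) ∈ σ.cells :=
          σ.mem_cells_mk.2 (show 1 ≤ m+2 ∧ m+2 ≤ σ.a ∧ σ.nu (m+2) < σ.nu (m+1) ∧
            σ.nu (m+1) ≤ σ.lam (m+2) by omega)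
        have hc2 : (m+1, σ.nu (m+1) + 1) ∈ σ.cells :=
          σ.mem_cells_mk.2 ⟨by omega, by omega, by omega,
            σ.nu_lt_lam (m+1) (by omega) (by omega)⟩
        have hc3 : (m+1, σ.nu (m+1)) ∉ σ.cells := by
          rw [mem_cells_mk]
          omega
        have hnw := σ.nw_eq hbal hc1 hc2 hc3
        unfold wt
        push_cast at hnw ⊢
        field_simp
        linarith
  rw [Finset.sum_congr rfl hstep, telescope h σ.a]
  simp only [hh, if_pos rfl, if_neg (by have := σ.ha; omega : ¬ σ.a = 0), σ.nu_a]
  push_cast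
  ring

lemma Fst_ideal (hbal : σ.Balanced) :
    ∀ I : Finset (ℕ × ℕ), σ.IsIdeal I → σ.Fst I = (σ.a : ℝ) * σ.b / ((σ.a : ℝ) + σ.b) := by
  intro I
  induction I using Finset.strongInductionOn with
  | _ I ih =>
    intro hI
    rcases I.eq_empty_or_nonempty with rfl | hne
    · exact σ.Fst_empty hbal
    · obtain ⟨q, hqI, hqmax⟩ := I.exists_maximal hne
      have hqc : q ∈ σ.cells := hI.1 hqI
      have hI' : σ.IsIdeal (I.erase q) := by
        refine ⟨fun x hx => hI.1 (Finset.mem_of_mem_erase hx), fun p hp r hr hle => ?_⟩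
        have hpI := Finset.mem_of_mem_erase hp
        have hrI : r ∈ I := hI.2 p hpI r hr hle
        rw [Finset.mem_erase]
        refine ⟨fun he => ?_, hrI⟩
        subst he
        exact (Finset.mem_erase.1 hp).1 (le_antisymm (hqmax hpI hle) hle)
      have hqmin : ∀ r ∈ σ.cells, r ≤ q → r ≠ q → r ∈ I.erase q := by
        intro r hr hle hne'
        rw [Finset.mem_erase]
        exact ⟨hne', hI.2 q hqI r hr hle⟩
      obtain ⟨x, y⟩ := q
      have hb := σ.mem_cells_mk.1 hqc
      have hy1 : 1 ≤ y := by
        have : 0 ≤ σ.nu x := Nat.zero_le _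
        omega
      obtain ⟨i, rfl⟩ : ∃ i, x = i + 1 := ⟨x - 1, by omega⟩
      obtain ⟨j, rfl⟩ : ∃ j, y = j + 1 := ⟨y - 1, by omega⟩
      have hqnotin : (i+1, j+1) ∉ I.erase (i+1, j+1) := Finset.notMem_erase _ _
      have hins : I = insert (i+1, j+1) (I.erase (i+1, j+1)) := (Finset.insert_erase hqI).symm
      rw [hins, σ.key_step hI' hqc hqnotin hqmin hbal]
      exact ih _ (Finset.erase_ssubset hqI) hI'

end SkewShape
namespace SkewShape

variable (σ : SkewShape)

/-- `m` is a minimal element of the complement of `I`. -/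
def minCompl (I : Finset (ℕ × ℕ)) (m : ℕ × ℕ) : Prop :=
  m ∈ σ.cells ∧ m ∉ I ∧ ∀ r ∈ σ.cells, r ≤ m → r ≠ m → r ∈ I

lemma symmDiff_of_mem {I : Finset (ℕ × ℕ)} {p : ℕ × ℕ} (h : p ∈ I) :
    symmDiff I {p} = I.erase p := by
  ext q
  rw [Finset.mem_symmDiff, Finset.mem_erase, Finset.mem_singleton]
  constructor
  · rintro (⟨hq, hne⟩ | ⟨rfl, hni⟩)
    · exact ⟨hne, hq⟩
    · exact absurd h hni
  · rintro ⟨hne, hq⟩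
    exact Or.inl ⟨hq, hne⟩

lemma symmDiff_of_not_mem {I : Finset (ℕ × ℕ)} {p : ℕ × ℕ} (h : p ∉ I) :
    symmDiff I {p} = insert p I := by
  ext q
  rw [Finset.mem_symmDiff, Finset.mem_insert, Finset.mem_singleton]
  constructor
  · rintro (⟨hq, _⟩ | ⟨rfl, _⟩)
    · exact Or.inr hq
    · exact Or.inl rfl
  · rintro (rfl | hq)
    · exact Or.inr ⟨rfl, h⟩
    · exact Or.inl ⟨hq, fun he => h (he ▸ hq)⟩

lemma toggle_isIdeal (p : ℕ × ℕ) {I : Finset (ℕ × ℕ)} (hI : σ.IsIdeal I) :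
    σ.IsIdeal (σ.toggle p I) := by
  unfold toggle
  split_ifs with h
  · exact h
  · exact hI

lemma foldr_isIdeal (L : List (ℕ × ℕ)) {I : Finset (ℕ × ℕ)} (hI : σ.IsIdeal I) :
    σ.IsIdeal (L.foldr σ.toggle I) := by
  induction L with
  | nil => exact hI
  | cons x rest ih => exact σ.toggle_isIdeal x ih

lemma toggle_toggle (p : ℕ × ℕ) {I : Finset (ℕ × ℕ)} (hI : σ.IsIdeal I) :
    σ.toggle p (σ.toggle p I) = I := by
  unfold toggle
  by_cases h : σ.IsIdeal (symmDiff I {p})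
  · rw [if_pos h, symmDiff_symmDiff_cancel_right, if_pos hI]
  · rw [if_neg h, if_neg h]

lemma foldr_inj (L : List (ℕ × ℕ)) {I J : Finset (ℕ × ℕ)} (hI : σ.IsIdeal I)
    (hJ : σ.IsIdeal J) (h : L.foldr σ.toggle I = L.foldr σ.toggle J) : I = J := by
  induction L with
  | nil => exact h
  | cons x rest ih =>
    apply ih
    have h2 := congrArg (σ.toggle x) h
    simp only [List.foldr_cons] at h
    rw [List.foldr_cons, List.foldr_cons] at h2
    rw [σ.toggle_toggle x (σ.foldr_isIdeal rest hI),
      σ.toggle_toggle x (σ.foldr_isIdeal rest hJ)] at h2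
    exact h2

lemma fold_invariant : ∀ L : List (ℕ × ℕ), (∀ x ∈ L, x ∈ σ.cells) → L.Nodup →
    L.Pairwise (fun p q => ¬(q ≤ p ∧ q ≠ p)) →
    (∀ x ∈ L, ∀ y ∈ σ.cells, x ≤ y → y = x ∨ y ∈ L) →
    ∀ I : Finset (ℕ × ℕ), σ.IsIdeal I →
      (∀ q, q ∉ L → (q ∈ L.foldr σ.toggle I ↔ q ∈ I)) ∧
      (∀ q ∈ L, q ∈ L.foldr σ.toggle I ↔ ∃ m, σ.minCompl I m ∧ q ≤ m) := by
  intro L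
  induction L with
  | nil =>
    intro _ _ _ _ I hI
    exact ⟨fun q _ => Iff.rfl, fun q hq => absurd hq List.not_mem_nil⟩
  | cons x rest ih =>
    intro hcells hnodup hpair hup I hI
    have hxc : x ∈ σ.cells := hcells x ((List.mem_cons_self (a := x) (l := rest)))
    have hxrest : x ∉ rest := (List.nodup_cons.1 hnodup).1
    have hpairhead : ∀ q ∈ rest, ¬(q ≤ x ∧ q ≠ x) := (List.pairwise_cons.1 hpair).1
    have hresthyp : ∀ z ∈ rest, ∀ y ∈ σ.cells, z ≤ y → y = z ∨ y ∈ rest := by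
      intro z hz y hy hle
      rcases hup z (List.mem_cons_of_mem x hz) y hy hle with he | hin
      · exact Or.inl he
      · rcases List.mem_cons.1 hin with rfl | hin2
        · exfalso
          exact hpairhead z hz ⟨hle, fun he => hxrest (he ▸ hz)⟩
        · exact Or.inr hin2
    obtain ⟨hJout, hJin⟩ := ih (fun y hy => hcells y (List.mem_cons_of_mem x hy))
      (List.nodup_cons.1 hnodup).2 (List.pairwise_cons.1 hpair).2 hresthyp I hI
    have hJideal : σ.IsIdeal (rest.foldr σ.toggle I) := σ.foldr_isIdeal rest hI
    set J := rest.foldr σ.toggle I with hJdef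
    have hfold : (x :: rest).foldr σ.toggle I = σ.toggle x J := rfl
    have hxJI : x ∈ J ↔ x ∈ I := hJout x hxrest
    have hno_below : ∀ r : ℕ × ℕ, r ≤ x → r ≠ x → r ∉ rest := by
      intro r hle hne hin
      exact hpairhead r hin ⟨hle, hne⟩
    by_cases hxmem : x ∈ I
    · have hxJ : x ∈ J := hxJI.2 hxmem
      have hsd : symmDiff J {x} = J.erase x := symmDiff_of_mem hxJ
      by_cases hex : ∃ m, σ.minCompl I m ∧ x ≤ m
      · obtain ⟨m, hm, hxm⟩ := hex
        have hmx : m ≠ x := fun he => hm.2.1 (he ▸ hxmem)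
        have hmrest : m ∈ rest := by
          rcases hup x ((List.mem_cons_self (a := x) (l := rest))) m hm.1 hxm with he | hin
          · exact absurd he hmx
          · rcases List.mem_cons.1 hin with he | hin2
            · exact absurd he hmx
            · exact hin2
        have hmJ : m ∈ J := (hJin m hmrest).2 ⟨m, hm, le_refl m⟩
        have hnotideal : ¬ σ.IsIdeal (J.erase x) := by
          intro hid
          have hmE : m ∈ J.erase x := Finset.mem_erase.2 ⟨hmx, hmJ⟩
          exact (Finset.mem_erase.1 (hid.2 m hmE x hxc hxm)).1 rfl
        have hJ' : (x :: rest).foldr σ.toggle I = J := by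
          rw [hfold]
          unfold toggle
          rw [hsd, if_neg hnotideal]
        rw [hJ']
        refine ⟨fun q hq => hJout q (fun h2 => hq (List.mem_cons_of_mem x h2)), fun q hq => ?_⟩
        rcases List.mem_cons.1 hq with rfl | hq2
        · exact iff_of_true hxJ ⟨m, hm, hxm⟩
        · exact hJin q hq2
      · have hxmax : ∀ y ∈ J, x ≤ y → y = x := by
          intro y hy hle
          by_contra hne
          have hyc : y ∈ σ.cells := hJideal.1 hy
          have hyrest : y ∈ rest := by
            rcases hup x ((List.mem_cons_self (a := x) (l := rest))) y hyc hle with he | hin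
            · exact absurd he hne
            · rcases List.mem_cons.1 hin with he | hin2
              · exact absurd he hne
              · exact hin2
          obtain ⟨m, hm, hym⟩ := (hJin y hyrest).1 hy
          exact hex ⟨m, hm, le_trans hle hym⟩
        have hideal : σ.IsIdeal (J.erase x) := by
          refine ⟨fun z hz => hJideal.1 (Finset.mem_of_mem_erase hz), fun p hp r hr hle => ?_⟩
          have hrJ : r ∈ J := hJideal.2 p (Finset.mem_of_mem_erase hp) r hr hle
          rw [Finset.mem_erase]
          refine ⟨fun he => ?_, hrJ⟩
          subst he
          exact (Finset.mem_erase.1 hp).1 (hxmax p (Finset.mem_of_mem_erase hp) hle)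
        have hJ' : (x :: rest).foldr σ.toggle I = J.erase x := by
          rw [hfold]
          unfold toggle
          rw [hsd, if_pos hideal]
        rw [hJ']
        constructor
        · intro q hq
          have hqx : q ≠ x := fun he => hq (he ▸ (List.mem_cons_self (a := x) (l := rest)))
          rw [Finset.mem_erase]
          rw [hJout q (fun h2 => hq (List.mem_cons_of_mem x h2))]
          simp [hqx]
        · intro q hq
          rcases List.mem_cons.1 hq with rfl | hq2
          · exact iff_of_false (Finset.notMem_erase _ _) hex
          · have hqx : q ≠ x := fun he => hxrest (he ▸ hq2)
            rw [Finset.mem_erase]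
            rw [← hJin q hq2]
            simp [hqx]
    · have hxJ : x ∉ J := fun h => hxmem (hxJI.1 h)
      have hsd : symmDiff J {x} = insert x J := symmDiff_of_not_mem hxJ
      by_cases hxmin : σ.minCompl I x
      · have hideal : σ.IsIdeal (insert x J) := by
          constructor
          · intro z hz
            rcases Finset.mem_insert.1 hz with rfl | hz2
            · exact hxc
            · exact hJideal.1 hz2
          · intro p hp r hr hle
            rcases Finset.mem_insert.1 hp with he | hp2
            · rw [he] at hle
              by_cases hrx : r = x
              · exact hrx ▸ Finset.mem_insert_self x J
              · have hrI : r ∈ I := hxmin.2.2 r hr hle hrx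
                have hrrest : r ∉ rest := hno_below r hle hrx
                exact Finset.mem_insert_of_mem ((hJout r hrrest).2 hrI)
            · exact Finset.mem_insert_of_mem (hJideal.2 p hp2 r hr hle)
        have hJ' : (x :: rest).foldr σ.toggle I = insert x J := by
          rw [hfold]
          unfold toggle
          rw [hsd, if_pos hideal]
        rw [hJ']
        constructor
        · intro q hq
          have hqx : q ≠ x := fun he => hq (he ▸ (List.mem_cons_self (a := x) (l := rest)))
          rw [Finset.mem_insert, hJout q (fun h2 => hq (List.mem_cons_of_mem x h2))]
          simp [hqx]
        · intro q hq
          rcases List.mem_cons.1 hq with rfl | hq2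
          · exact iff_of_true (Finset.mem_insert_self _ _) ⟨q, hxmin, le_refl q⟩
          · have hqx : q ≠ x := fun he => hxrest (he ▸ hq2)
            rw [Finset.mem_insert, ← hJin q hq2]
            simp [hqx]
      · have hnotideal : ¬ σ.IsIdeal (insert x J) := by
          intro hid
          apply hxmin
          refine ⟨hxc, hxmem, fun r hr hle hne => ?_⟩
          have hrJ : r ∈ insert x J := hid.2 x (Finset.mem_insert_self x J) r hr hle
          rcases Finset.mem_insert.1 hrJ with rfl | hr2
          · exact absurd rfl hne
          · have hrrest : r ∉ rest := hno_below r hle hne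
            exact (hJout r hrrest).1 hr2
        have hJ' : (x :: rest).foldr σ.toggle I = J := by
          rw [hfold]
          unfold toggle
          rw [hsd, if_neg hnotideal]
        rw [hJ']
        refine ⟨fun q hq => hJout q (fun h2 => hq (List.mem_cons_of_mem x h2)), fun q hq => ?_⟩
        rcases List.mem_cons.1 hq with he | hq2
        · rw [he]
          refine iff_of_false hxJ ?_
          rintro ⟨m, hm, hxm⟩
          have hmx : m ≠ x := fun he => hxmin (he ▸ hm)
          exact hxmem (hm.2.2 x hxc hxm (fun he => hmx he.symm))
        · exact hJin q hq2

lemma rowmotion_spec {L : List (ℕ × ℕ)} (hL : σ.IsLinExtList L) {I : Finset (ℕ × ℕ)}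
    (hI : σ.IsIdeal I) :
    ∀ q ∈ σ.cells, (q ∈ σ.rowmotion L I ↔ ∃ m, σ.minCompl I m ∧ q ≤ m) := by
  obtain ⟨hnodup, htf, hpair⟩ := hL
  have hcells : ∀ x ∈ L, x ∈ σ.cells := by
    intro x hx
    rw [← htf]
    exact List.mem_toFinset.2 hx
  have hup : ∀ x ∈ L, ∀ y ∈ σ.cells, x ≤ y → y = x ∨ y ∈ L := by
    intro x _ y hy _
    exact Or.inr (List.mem_toFinset.1 (htf ▸ hy))
  obtain ⟨-, hin⟩ := σ.fold_invariant L hcells hnodup hpair hup I hI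
  intro q hq
  exact hin q (List.mem_toFinset.1 (htf ▸ hq))

lemma maxSet_rowmotion {L : List (ℕ × ℕ)} (hL : σ.IsLinExtList L) {I : Finset (ℕ × ℕ)}
    (hI : σ.IsIdeal I) : maxSet (σ.rowmotion L I) = σ.minCset I := by
  have hRideal : σ.IsIdeal (σ.rowmotion L I) := σ.foldr_isIdeal L hI
  have hRmem := σ.rowmotion_spec hL hI
  ext q
  rw [mem_maxSet, mem_minCset]
  constructor
  · rintro ⟨hqR, hqmax⟩
    have hqc : q ∈ σ.cells := hRideal.1 hqR
    obtain ⟨m, hm, hqm⟩ := (hRmem q hqc).1 hqR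
    have hmR : m ∈ σ.rowmotion L I := (hRmem m hm.1).2 ⟨m, hm, le_refl m⟩
    have heq := hqmax m hmR hqm
    subst heq
    exact ⟨hqc, hm.2.1, hm.2.2⟩
  · rintro ⟨hqc, hqnI, hqmin⟩
    have hqCompl : σ.minCompl I q := ⟨hqc, hqnI, hqmin⟩
    refine ⟨(hRmem q hqc).2 ⟨q, hqCompl, le_refl q⟩, fun y hy hle => ?_⟩
    have hyc : y ∈ σ.cells := hRideal.1 hy
    obtain ⟨m, hm, hym⟩ := (hRmem y hyc).1 hy
    have hqm : q ≤ m := le_trans hle hym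
    have heq : q = m := by
      by_contra hne
      exact hqnI (hm.2.2 q hqc hqm hne)
    rw [← heq] at hym
    exact le_antisymm hym hle

end SkewShape

set_option maxHeartbeats 1000000 in

/-- Corollary 3.13 for rowmotion: for a balanced skew shape `σ` with
height `a` and width `b`, the antichain cardinality statistic is `ab/(a+b)`-mesic with
respect to rowmotion on `J(P_σ)`: for every linear extension and every rowmotion-orbit
`O` (the set of iterates of an order ideal `I₀`), the average of `#A(I)` over `O` equals
`ab/(a+b)`. -/
theorem SkewShape.antichain_homomesy_rowmotion (σ : SkewShape) (hbal : σ.Balanced)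
    (L : List (ℕ × ℕ)) (hL : σ.IsLinExtList L)
    (I₀ : Finset (ℕ × ℕ)) (hI₀ : σ.IsIdeal I₀)
    (O : Finset (Finset (ℕ × ℕ)))
    (hO : ∀ J, J ∈ O ↔ ∃ k : ℕ, (σ.rowmotion L)^[k] I₀ = J) :
    (∑ J ∈ O, (SkewShape.antichainCard J : ℝ)) / (O.card : ℝ) =
      (σ.a : ℝ) * (σ.b : ℝ) / ((σ.a : ℝ) + (σ.b : ℝ)) := by
  classical
  have hI0O : I₀ ∈ O := (hO I₀).2 ⟨0, rfl⟩
  have hcard0 : O.card ≠ 0 := Finset.card_ne_zero_of_mem hI0O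
  have hOideal : ∀ J ∈ O, σ.IsIdeal J := by
    intro J hJ
    obtain ⟨k, rfl⟩ := (hO J).1 hJ
    clear hJ
    induction k with
    | zero => exact hI₀
    | succ k ih =>
      rw [Function.iterate_succ_apply']
      exact σ.foldr_isIdeal L ih
  have hclosed : ∀ J ∈ O, σ.rowmotion L J ∈ O := by
    intro J hJ
    obtain ⟨k, rfl⟩ := (hO J).1 hJ
    exact (hO _).2 ⟨k+1, (Function.iterate_succ_apply' (σ.rowmotion L) k I₀)⟩
  have hinjOn : ∀ x ∈ O, ∀ y ∈ O, σ.rowmotion L x = σ.rowmotion L y → x = y := by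
    intro x hx y hy he
    exact σ.foldr_inj L (hOideal x hx) (hOideal y hy) he
  have himage : O.image (σ.rowmotion L) = O := by
    apply Finset.eq_of_subset_of_card_le
    · intro x hx
      obtain ⟨J, hJ, rfl⟩ := Finset.mem_image.1 hx
      exact hclosed J hJ
    · rw [Finset.card_image_of_injOn hinjOn]
  have hshift : ∑ J ∈ O, (∑ q ∈ SkewShape.maxSet (σ.rowmotion L J), σ.wt q)
      = ∑ J ∈ O, (∑ q ∈ SkewShape.maxSet J, σ.wt q) := by
    have h2 := Finset.sum_image (f := fun J => ∑ q ∈ SkewShape.maxSet J, σ.wt q)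
      (g := σ.rowmotion L) (s := O) hinjOn
    rw [himage] at h2
    exact h2.symm
  have hkey : ∀ J ∈ O, (SkewShape.antichainCard J : ℝ)
      = (σ.a : ℝ) * σ.b / ((σ.a : ℝ) + σ.b)
        - (∑ q ∈ σ.minCset J, σ.wt q) + (∑ q ∈ SkewShape.maxSet J, σ.wt q) := by
    intro J hJm
    have hF := σ.Fst_ideal hbal J (hOideal J hJm)
    unfold SkewShape.Fst at hF
    rw [Finset.sum_sub_distrib] at hF
    have hac : (SkewShape.antichainCard J : ℝ) = ∑ _q ∈ SkewShape.maxSet J, (1 : ℝ) := by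
      rw [Finset.sum_const, nsmul_eq_mul, mul_one]
      rfl
    rw [hac]
    linarith
  have hsum : ∑ J ∈ O, (SkewShape.antichainCard J : ℝ)
      = (O.card : ℝ) * ((σ.a : ℝ) * σ.b / ((σ.a : ℝ) + σ.b)) := by
    rw [Finset.sum_congr rfl hkey]
    have hmm : ∀ J ∈ O, ∑ q ∈ σ.minCset J, σ.wt q
        = ∑ q ∈ SkewShape.maxSet (σ.rowmotion L J), σ.wt q := by
      intro J hJm
      rw [σ.maxSet_rowmotion hL (hOideal J hJm)]
    rw [Finset.sum_add_distrib, Finset.sum_sub_distrib, Finset.sum_congr rfl hmm, hshift]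
    rw [Finset.sum_const, nsmul_eq_mul]
    ring
  rw [hsum]
  have hcardR : (O.card : ℝ) ≠ 0 := Nat.cast_ne_zero.2 hcard0
  field_simp
end
end
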